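/- arXiv:1301.6385 — 5 statements merged into one kernel-verified Lean document; each statement's English description precedes it below -/
import Mathlib

section
/- Let X be a real random variable with characteristic function Ψ_X(u) = E[e^{iuX}]. Then Ψ_X(u) → 0 as |u| → ∞ if and only if the law of the fractional part {X} = X - ⌊X⌋, viewed as a measure on [0,1), has Fourier coefficients ∫ e^{2πinx} dμ(x) tending to 0 as |n| → ∞. -/
open MeasureTheory Filter

open Set
open scoped ENNReal NNReal

instance fact_zero_lt_one_real : Fact ((0:ℝ) < 1) := ⟨one_pos⟩

noncomputable section

namespace Stmt0Proof

abbrev TT := AddCircle (1:ℝ)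

theorem integrable_bdd {α : Type*} [MeasurableSpace α] (μ : Measure α) [IsFiniteMeasure μ]
    {f : α → ℂ} (hf : AEStronglyMeasurable f μ) (C : ℝ) (h : ∀ a, ‖f a‖ ≤ C) :
    Integrable f μ :=
  (integrable_const C).mono' hf (Filter.Eventually.of_forall h)

theorem norm_fourier_apply (n : ℤ) (x : TT) : ‖fourier n x‖ = 1 := Circle.norm_coe _

theorem int_fourier_mul (ν : Measure TT) [IsFiniteMeasure ν] (n : ℤ) {φ : TT → ℂ}
    (hφ : Integrable φ ν) : Integrable (fun x => fourier n x * φ x) ν :=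
  hφ.bdd_mul (map_continuous (fourier n)).aestronglyMeasurable
    (Filter.Eventually.of_forall fun x => le_of_eq (norm_fourier_apply n x))

theorem cm_integrable (ν : Measure TT) [IsFiniteMeasure ν] (g : C(TT, ℂ)) : Integrable g ν :=
  integrable_bdd ν (map_continuous g).aestronglyMeasurable ‖g‖ fun x => g.norm_coe_le_norm x

theorem tendsto_translate (m : ℤ) : Tendsto (fun n : ℤ => n + m) (cocompact ℤ) (cocompact ℤ) := by
  rw [cocompact_eq_cofinite]
  exact (add_left_injective m).tendsto_cofinite

theorem tendsto_span (ν : Measure TT) [IsFiniteMeasure ν]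
    (hν : Tendsto (fun n : ℤ => ∫ x, fourier n x ∂ν) (cocompact ℤ) (nhds 0))
    (f : C(TT, ℂ)) (hf : f ∈ Submodule.span ℂ (Set.range (@fourier 1))) :
    Tendsto (fun n : ℤ => ∫ x, fourier n x * f x ∂ν) (cocompact ℤ) (nhds 0) := by
  induction hf using Submodule.span_induction with
  | mem g hg =>
    obtain ⟨m, rfl⟩ := hg
    have hfun : ∀ n : ℤ, (fun x : TT => fourier n x * fourier m x)
        = fun x : TT => fourier (n + m) x := by
      intro n; ext x; rw [← fourier_add]
    have := hν.comp (tendsto_translate m)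
    simpa only [Function.comp_def, hfun] using this
  | zero =>
    simpa using tendsto_const_nhds (x := (0:ℂ)) (f := cocompact ℤ)
  | add g h hg hh hg' hh' =>
    have heq : ∀ n : ℤ, ∫ x, fourier n x * (g + h) x ∂ν
        = (∫ x, fourier n x * g x ∂ν) + ∫ x, fourier n x * h x ∂ν := by
      intro n
      rw [← integral_add (int_fourier_mul ν n (cm_integrable ν g))
        (int_fourier_mul ν n (cm_integrable ν h))]
      simp [mul_add]
    simpa only [heq] using by simpa using hg'.add hh'
  | smul c g hg hg' =>
    have heq : ∀ n : ℤ, ∫ x, fourier n x * (c • g) x ∂ν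
        = c • ∫ x, fourier n x * g x ∂ν := by
      intro n
      rw [← integral_smul]
      congr 1; ext x; simp [smul_eq_mul]; ring
    simpa only [heq] using by simpa using hg'.const_smul c

theorem rajchman_mul (ν : Measure TT) [IsFiniteMeasure ν]
    (hν : Tendsto (fun n : ℤ => ∫ x, fourier n x ∂ν) (cocompact ℤ) (nhds 0))
    {φ : TT → ℂ} (hφi : Integrable φ ν) :
    Tendsto (fun n : ℤ => ∫ x, fourier n x * φ x ∂ν) (cocompact ℤ) (nhds 0) := by
  rw [NormedAddCommGroup.tendsto_nhds_zero]
  intro ε hε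
  -- approximate φ by a bounded continuous function g
  obtain ⟨g, hg_close, hg_int⟩ :=
    hφi.exists_boundedContinuous_integral_sub_le (show (0:ℝ) < ε/4 by positivity)
  -- approximate g by a trigonometric polynomial f
  set δ : ℝ := ε / (4 * ((ν Set.univ).toReal + 1)) with hδdef
  have htν : 0 ≤ (ν Set.univ).toReal := ENNReal.toReal_nonneg
  have hδpos : 0 < δ := by positivity
  have hmem : g.toContinuousMap ∈
      closure ((Submodule.span ℂ (Set.range (@fourier 1)) : Submodule ℂ C(TT, ℂ)) : Set C(TT, ℂ)) := by
    have h1 : g.toContinuousMap ∈ (Submodule.span ℂ (Set.range (@fourier 1))).topologicalClosure := by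
      rw [span_fourier_closure_eq_top]; trivial
    rwa [← Submodule.topologicalClosure_coe]
  obtain ⟨f, hf_mem, hf_close⟩ := Metric.mem_closure_iff.mp hmem δ hδpos
  obtain ⟨f, hf_mem, rfl⟩ : ∃ f' ∈ Submodule.span ℂ (Set.range (@fourier 1)), f' = f := ⟨f, hf_mem, rfl⟩
  -- total L¹ error
  have hfi : Integrable (⇑f) ν := cm_integrable ν f
  have herr : ∫ x, ‖φ x - f x‖ ∂ν ≤ ε/2 := by
    have hsplit : ∀ x, ‖φ x - f x‖ ≤ ‖φ x - g x‖ + ‖g x - f x‖ := fun x => by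
      simpa using norm_sub_le_norm_sub_add_norm_sub (φ x) (g x) (f x)
    have h2 : ∀ x : TT, ‖g x - f x‖ ≤ δ := fun x => by
      have := ContinuousMap.dist_apply_le_dist (f := g.toContinuousMap) (g := f) x
      rw [dist_eq_norm] at this
      exact le_trans this hf_close.le
    have hint1 : Integrable (fun x => ‖φ x - g x‖) ν := (hφi.sub hg_int).norm
    have hint2 : Integrable (fun x => ‖g x - f x‖) ν := (hg_int.sub hfi).norm
    calc ∫ x, ‖φ x - f x‖ ∂ν ≤ ∫ x, (‖φ x - g x‖ + ‖g x - f x‖) ∂ν := by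
          apply integral_mono ((hφi.sub hfi).norm) (hint1.add hint2) hsplit
      _ = (∫ x, ‖φ x - g x‖ ∂ν) + ∫ x, ‖g x - f x‖ ∂ν := integral_add hint1 hint2
      _ ≤ ε/4 + δ * (ν Set.univ).toReal := by
          gcongr
          calc ∫ x, ‖g x - f x‖ ∂ν ≤ ∫ _x, δ ∂ν := by
                apply integral_mono hint2 (integrable_const δ) h2
            _ = (ν Set.univ).toReal • δ := integral_const δ
            _ = δ * (ν Set.univ).toReal := by rw [smul_eq_mul, mul_comm]
      _ ≤ ε/4 + ε/4 := by
          have : δ * (ν Set.univ).toReal ≤ ε/4 := by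
            rw [hδdef, div_mul_eq_mul_div, div_le_iff₀ (by positivity)]
            nlinarith
          linarith
      _ = ε/2 := by ring
  have hspan := tendsto_span ν hν f hf_mem
  filter_upwards [(NormedAddCommGroup.tendsto_nhds_zero.mp hspan) (ε/2) (by positivity)] with n hn
  have hkey : ‖(∫ x, fourier n x * φ x ∂ν) - ∫ x, fourier n x * f x ∂ν‖ ≤ ∫ x, ‖φ x - f x‖ ∂ν := by
    rw [← integral_sub (int_fourier_mul ν n hφi) (int_fourier_mul ν n hfi)]
    calc ‖∫ x, (fourier n x * φ x - fourier n x * f x) ∂ν‖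
        ≤ ∫ x, ‖fourier n x * φ x - fourier n x * f x‖ ∂ν := norm_integral_le_integral_norm _
      _ = ∫ x, ‖φ x - f x‖ ∂ν := by
          congr 1; ext x
          rw [← mul_sub, norm_mul, norm_fourier_apply, one_mul]
  calc ‖∫ x, fourier n x * φ x ∂ν‖
      ≤ ‖∫ x, fourier n x * f x ∂ν‖ +
        ‖(∫ x, fourier n x * φ x ∂ν) - ∫ x, fourier n x * f x ∂ν‖ := by
        exact norm_le_insert' _ _
    _ < ε/2 + ε/2 := by
        have := le_trans hkey herr
        apply add_lt_add_of_lt_of_le hn this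
    _ = ε := by ring

theorem rajchman_le (ν ρ : Measure TT) [IsFiniteMeasure ν] (hρ : ρ ≤ ν)
    (hν : Tendsto (fun n : ℤ => ∫ x, fourier n x ∂ν) (cocompact ℤ) (nhds 0)) :
    Tendsto (fun n : ℤ => ∫ x, fourier n x ∂ρ) (cocompact ℤ) (nhds 0) := by
  haveI : IsFiniteMeasure ρ := isFiniteMeasure_of_le ν hρ
  have hac : ρ ≪ ν := Measure.absolutelyContinuous_of_le hρ
  haveI : ρ.HaveLebesgueDecomposition ν := Measure.haveLebesgueDecomposition_of_sigmaFinite ρ ν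
  have hint : Integrable (fun x => ((ρ.rnDeriv ν x).toReal : ℂ)) ν :=
    (Measure.integrable_toReal_rnDeriv).ofReal
  have heq : ∀ n : ℤ, ∫ x, fourier n x ∂ρ
      = ∫ x, fourier n x * ((ρ.rnDeriv ν x).toReal : ℂ) ∂ν := by
    intro n
    rw [← MeasureTheory.integral_rnDeriv_smul hac (f := fun x => fourier n x)]
    congr 1; ext x
    rw [Complex.real_smul, mul_comm]
  simpa only [heq] using rajchman_mul ν hν hint

section RV

variable {Ω : Type*} [MeasurableSpace Ω] (P : Measure Ω) [IsProbabilityMeasure P]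
  (X : Ω → ℝ) (hX : Measurable X)

include hX

theorem tendsto_mul_nonneg
    (H : Tendsto (fun n : ℤ => ∫ ω, fourier n (X ω : TT) ∂P) (cocompact ℤ) (nhds 0))
    (h : Ω → ℝ) (hm : Measurable h) (h0 : ∀ ω, 0 ≤ h ω) (h1 : ∀ ω, h ω ≤ 1) :
    Tendsto (fun n : ℤ => ∫ ω, fourier n (X ω : TT) * (h ω : ℂ) ∂P)
      (cocompact ℤ) (nhds 0) := by
  have hmk : Measurable (fun ω => (X ω : TT)) := AddCircle.measurable_mk'.comp hX
  set ν : Measure TT := Measure.map (fun ω => (X ω : TT)) P with hνdef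
  haveI : IsProbabilityMeasure ν := Measure.isProbabilityMeasure_map hmk.aemeasurable
  set ρ : Measure TT := Measure.map (fun ω => (X ω : TT))
      (P.withDensity (fun ω => ((h ω).toNNReal : ℝ≥0∞))) with hρdef
  have hρν : ρ ≤ ν := by
    rw [Measure.le_iff]
    intro s hs
    rw [hρdef, hνdef, Measure.map_apply hmk hs, Measure.map_apply hmk hs,
      withDensity_apply _ (hmk hs)]
    calc ∫⁻ ω in (fun ω => (X ω : TT)) ⁻¹' s, ((h ω).toNNReal : ℝ≥0∞) ∂P
        ≤ ∫⁻ _ω in (fun ω => (X ω : TT)) ⁻¹' s, 1 ∂P := by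
          refine setLIntegral_mono measurable_const fun ω _ => ?_
          exact ENNReal.ofReal_le_one.mpr (h1 ω)
      _ = P ((fun ω => (X ω : TT)) ⁻¹' s) := by rw [setLIntegral_one]
  have hν : Tendsto (fun n : ℤ => ∫ x, fourier n x ∂ν) (cocompact ℤ) (nhds 0) := by
    have : ∀ n : ℤ, ∫ x, fourier n x ∂ν = ∫ ω, fourier n (X ω : TT) ∂P := fun n =>
      integral_map hmk.aemeasurable (map_continuous (fourier n)).aestronglyMeasurable
    simpa only [this] using H
  have heq : ∀ n : ℤ, ∫ x, fourier n x ∂ρ = ∫ ω, fourier n (X ω : TT) * (h ω : ℂ) ∂P := by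
    intro n
    rw [hρdef, integral_map hmk.aemeasurable (map_continuous (fourier n)).aestronglyMeasurable,
      integral_withDensity_eq_integral_smul hm.real_toNNReal]
    congr 1; ext ω
    rw [NNReal.smul_def, Real.coe_toNNReal _ (h0 ω), Complex.real_smul, mul_comm]
  simpa only [heq] using rajchman_le ν ρ hρν hν

theorem tendsto_mul_real
    (H : Tendsto (fun n : ℤ => ∫ ω, fourier n (X ω : TT) ∂P) (cocompact ℤ) (nhds 0))
    (v : Ω → ℝ) (hm : Measurable v) (hv : ∀ ω, |v ω| ≤ 1) :
    Tendsto (fun n : ℤ => ∫ ω, fourier n (X ω : TT) * (v ω : ℂ) ∂P)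
      (cocompact ℤ) (nhds 0) := by
  set h : Ω → ℝ := fun ω => (v ω + 1) / 2 with hdef
  have h0 : ∀ ω, 0 ≤ h ω := fun ω => by
    have := abs_le.mp (hv ω); simp only [hdef]; linarith [this.1]
  have h1 : ∀ ω, h ω ≤ 1 := fun ω => by
    have := abs_le.mp (hv ω); simp only [hdef]; linarith [this.2]
  have hhm : Measurable h := (hm.add_const 1).div_const 2
  have htm := tendsto_mul_nonneg P X hX H h hhm h0 h1
  have hint1 : ∀ n : ℤ, Integrable (fun ω => fourier n (X ω : TT) * (h ω : ℂ)) P := by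
    intro n
    refine integrable_bdd P ?_ 1 fun ω => ?_
    · exact (((map_continuous (fourier n)).measurable.comp
        (AddCircle.measurable_mk'.comp hX)).mul
        (Complex.measurable_ofReal.comp hhm)).aestronglyMeasurable
    · rw [norm_mul, norm_fourier_apply, one_mul, Complex.norm_real, Real.norm_eq_abs,
        abs_of_nonneg (h0 ω)]
      exact h1 ω
  have hintc : ∀ n : ℤ, Integrable (fun ω => fourier n (X ω : TT)) P := by
    intro n
    refine integrable_bdd P ?_ 1 fun ω => le_of_eq (norm_fourier_apply _ _)
    exact ((map_continuous (fourier n)).measurable.comp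
      (AddCircle.measurable_mk'.comp hX)).aestronglyMeasurable
  have heq : ∀ n : ℤ, ∫ ω, fourier n (X ω : TT) * (v ω : ℂ) ∂P
      = (2:ℂ) * (∫ ω, fourier n (X ω : TT) * (h ω : ℂ) ∂P)
        - ∫ ω, fourier n (X ω : TT) ∂P := by
    intro n
    rw [← integral_const_mul, ← integral_sub ((hint1 n).const_mul 2) (hintc n)]
    congr 1; ext ω
    have : ((h ω : ℂ)) = ((v ω : ℂ) + 1) / 2 := by rw [hdef]; push_cast; ring
    rw [this]; ring
  have := ((htm.const_mul (2:ℂ)).sub H)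
  simp only [mul_zero, sub_zero] at this
  simpa only [heq] using this

theorem tendsto_mul_bdd
    (H : Tendsto (fun n : ℤ => ∫ ω, fourier n (X ω : TT) ∂P) (cocompact ℤ) (nhds 0))
    (g : Ω → ℂ) (hgm : Measurable g) (hg : ∀ ω, ‖g ω‖ ≤ 1) :
    Tendsto (fun n : ℤ => ∫ ω, fourier n (X ω : TT) * g ω ∂P) (cocompact ℤ) (nhds 0) := by
  have hre := tendsto_mul_real P X hX H (fun ω => (g ω).re) (Complex.measurable_re.comp hgm)
    (fun ω => le_trans (Complex.abs_re_le_norm _) (hg ω))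
  have him := tendsto_mul_real P X hX H (fun ω => (g ω).im) (Complex.measurable_im.comp hgm)
    (fun ω => le_trans (Complex.abs_im_le_norm _) (hg ω))
  have hintre : ∀ n : ℤ, Integrable (fun ω => fourier n (X ω : TT) * ((g ω).re : ℂ)) P := by
    intro n
    refine integrable_bdd P ?_ 1 fun ω => ?_
    · exact (((map_continuous (fourier n)).measurable.comp
        (AddCircle.measurable_mk'.comp hX)).mul
        (Complex.measurable_ofReal.comp (Complex.measurable_re.comp hgm))).aestronglyMeasurable
    · rw [norm_mul, norm_fourier_apply, one_mul, Complex.norm_real, Real.norm_eq_abs]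
      exact le_trans (Complex.abs_re_le_norm _) (hg ω)
  have hintim : ∀ n : ℤ, Integrable (fun ω => fourier n (X ω : TT) * ((g ω).im : ℂ)) P := by
    intro n
    refine integrable_bdd P ?_ 1 fun ω => ?_
    · exact (((map_continuous (fourier n)).measurable.comp
        (AddCircle.measurable_mk'.comp hX)).mul
        (Complex.measurable_ofReal.comp (Complex.measurable_im.comp hgm))).aestronglyMeasurable
    · rw [norm_mul, norm_fourier_apply, one_mul, Complex.norm_real, Real.norm_eq_abs]
      exact le_trans (Complex.abs_im_le_norm _) (hg ω)
  have heq : ∀ n : ℤ, ∫ ω, fourier n (X ω : TT) * g ω ∂P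
      = (∫ ω, fourier n (X ω : TT) * ((g ω).re : ℂ) ∂P)
        + (∫ ω, fourier n (X ω : TT) * ((g ω).im : ℂ) ∂P) * Complex.I := by
    intro n
    rw [← integral_mul_const, ← integral_add (hintre n) ((hintim n).mul_const Complex.I)]
    congr 1; ext ω
    have : g ω = ((g ω).re : ℂ) + ((g ω).im : ℂ) * Complex.I := by
      simp [Complex.re_add_im]
    conv_lhs => rw [this]
    ring
  have := hre.add (him.mul_const Complex.I)
  simp only [zero_mul, add_zero] at this
  simpa only [heq] using this

theorem int_exp (c : ℝ) : Integrable (fun ω => Complex.exp (Complex.I * (c * X ω))) P := by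
  refine integrable_bdd P ?_ 1 fun ω => ?_
  · exact (Complex.measurable_exp.comp
      (((Complex.measurable_ofReal.comp hX).const_mul (c:ℂ)).const_mul Complex.I)).aestronglyMeasurable
  · rw [Complex.norm_exp]
    simp

theorem tendsto_shift
    (H : Tendsto (fun n : ℤ => ∫ ω, fourier n (X ω : TT) ∂P) (cocompact ℤ) (nhds 0)) (s : ℝ) :
    Tendsto (fun n : ℤ => ∫ ω, Complex.exp (Complex.I * ((2*Real.pi*n + s) * X ω)) ∂P)
      (cocompact ℤ) (nhds 0) := by
  have hb := tendsto_mul_bdd P X hX H (fun ω => Complex.exp (Complex.I * (s * X ω)))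
    (Complex.measurable_exp.comp
      (((Complex.measurable_ofReal.comp hX).const_mul (s:ℂ)).const_mul Complex.I))
    (fun ω => by rw [Complex.norm_exp]; simp)
  have heq : ∀ (n : ℤ) (ω : Ω), fourier n (X ω : TT) * Complex.exp (Complex.I * (s * X ω))
      = Complex.exp (Complex.I * ((2*Real.pi*n + s) * X ω)) := by
    intro n ω
    rw [fourier_coe_apply, ← Complex.exp_add]
    congr 1
    push_cast
    ring
  simpa only [heq] using hb

end RV

theorem fourier_eq_fract (n : ℤ) (x : ℝ) :
    fourier n (x : TT) = Complex.exp (2 * Real.pi * Complex.I * (n * Int.fract x)) := by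
  rw [fourier_coe_apply]
  have hx : (x : ℂ) = (⌊x⌋ : ℂ) + ((Int.fract x : ℝ) : ℂ) := by
    rw [← Int.self_sub_floor]
    push_cast
    ring
  rw [show (2 * (Real.pi:ℂ) * Complex.I * n * x / ((1:ℝ):ℂ))
      = ((n * ⌊x⌋ : ℤ) : ℂ) * (2 * Real.pi * Complex.I)
        + 2 * Real.pi * Complex.I * (n * ((Int.fract x : ℝ) : ℂ)) by
    rw [hx]; push_cast; ring]
  rw [Complex.exp_add, Complex.exp_int_mul_two_pi_mul_I, one_mul]

theorem exp_eq_fract (n : ℤ) (x : ℝ) :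
    Complex.exp (Complex.I * ((2*Real.pi*n : ℝ) * x))
      = Complex.exp (2 * Real.pi * Complex.I * (n * Int.fract x)) := by
  rw [← fourier_eq_fract, fourier_coe_apply]
  congr 1
  push_cast
  ring

end Stmt0Proof

open Stmt0Proof in
/-- For a real random variable `X`, the characteristic function
`Ψ_X(u) = E[e^{iuX}]` tends to `0` as `|u| → ∞` if and only if the Fourier
coefficients `∫ e^{2πin{X}} dP` of the law of the fractional part `{X}`
tend to `0` as `|n| → ∞`. -/
theorem stmt0 {Ω : Type*} [MeasurableSpace Ω] (P : Measure Ω) [IsProbabilityMeasure P]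
    (X : Ω → ℝ) (hX : Measurable X) :
    Tendsto (fun u : ℝ => ∫ ω, Complex.exp (Complex.I * (u * X ω)) ∂P)
        (cocompact ℝ) (nhds 0) ↔
      Tendsto (fun n : ℤ => ∫ ω,
          Complex.exp (2 * Real.pi * Complex.I * (n * Int.fract (X ω))) ∂P)
        (cocompact ℤ) (nhds 0) := by
  constructor
  · -- easy direction
    intro hF
    have hcomp : Tendsto (fun n : ℤ => (2*Real.pi*n : ℝ)) (cocompact ℤ) (cocompact ℝ) := by
      rw [cocompact_eq_atBot_atTop, cocompact_eq_atBot_atTop]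
      refine tendsto_sup.mpr ⟨?_, ?_⟩
      · exact (Tendsto.const_mul_atBot Real.two_pi_pos
          (tendsto_intCast_atBot_iff.mpr tendsto_id)).mono_right le_sup_left
      · exact (Tendsto.const_mul_atTop Real.two_pi_pos
          tendsto_intCast_atTop_atTop).mono_right le_sup_right
    have h2 := hF.comp hcomp
    simp only [Function.comp_def, exp_eq_fract] at h2
    exact h2
  · intro hc
    have H : Tendsto (fun n : ℤ => ∫ ω, fourier n (X ω : TT) ∂P) (cocompact ℤ) (nhds 0) := by
      simpa only [fourier_eq_fract] using hc
    rw [NormedAddCommGroup.tendsto_nhds_zero]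
    intro ε hε
    -- uniform-continuity modulus
    obtain ⟨δ, hδpos, hδ⟩ : ∃ δ > 0, ∀ r : ℝ, |r| < δ →
        (∫ ω, ‖Complex.exp (Complex.I * (r * X ω)) - 1‖ ∂P) < ε/2 := by
      have hcont : Tendsto (fun r : ℝ => ∫ ω, ‖Complex.exp (Complex.I * (r * X ω)) - 1‖ ∂P)
          (nhds 0) (nhds (∫ (_ω : Ω), (0:ℝ) ∂P)) := by
        apply tendsto_integral_filter_of_dominated_convergence (fun _ => (2:ℝ))
        · exact Filter.Eventually.of_forall fun r =>
            (((Complex.measurable_exp.comp (((Complex.measurable_ofReal.comp hX).const_mul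
              (r:ℂ)).const_mul Complex.I)).sub measurable_const).norm).aestronglyMeasurable
        · refine Filter.Eventually.of_forall fun r => Filter.Eventually.of_forall fun ω => ?_
          rw [norm_norm]
          calc ‖Complex.exp (Complex.I * (r * X ω)) - 1‖
              ≤ ‖Complex.exp (Complex.I * (r * X ω))‖ + ‖(1:ℂ)‖ := norm_sub_le _ _
            _ ≤ 2 := by
                rw [Complex.norm_exp]
                simp
                norm_num
        · exact integrable_const 2
        · refine Filter.Eventually.of_forall fun ω => ?_
          have hcc : Continuous fun r : ℝ => ‖Complex.exp (Complex.I * (r * X ω)) - 1‖ := by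
            fun_prop
          have := hcc.tendsto 0
          simpa using this
      simp only [integral_zero] at hcont
      have hev : ∀ᶠ r : ℝ in nhds 0,
          (∫ ω, ‖Complex.exp (Complex.I * (r * X ω)) - 1‖ ∂P) < ε/2 :=
        hcont (Iio_mem_nhds (by positivity))
      obtain ⟨δ, hδpos, hball⟩ := Metric.eventually_nhds_iff.mp hev
      exact ⟨δ, hδpos, fun r hr => hball (show dist r 0 < δ by rwa [Real.dist_eq, sub_zero])⟩
    set m : ℕ := ⌈(2*Real.pi)/δ⌉₊ with hm
    have hnet : ∀ᶠ n : ℤ in cocompact ℤ, ∀ j ∈ Finset.range (m+1),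
        ‖∫ ω, Complex.exp (Complex.I * ((2*Real.pi*n + j*δ) * X ω)) ∂P‖ < ε/2 := by
      rw [Finset.eventually_all]
      intro j _hj
      have h5 := (NormedAddCommGroup.tendsto_nhds_zero.mp
        (tendsto_shift P X hX H (j*δ))) (ε/2) (by positivity)
      push_cast at h5 ⊢
      exact h5
    rw [cocompact_eq_atBot_atTop, eventually_sup] at hnet
    obtain ⟨hbot, htop⟩ := hnet
    obtain ⟨N₂, hN₂⟩ := eventually_atBot.mp hbot
    obtain ⟨N₁, hN₁⟩ := eventually_atTop.mp htop
    have hππ : (0:ℝ) < 2*Real.pi := Real.two_pi_pos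
    have hmain : ∀ u : ℝ, u < 2*Real.pi*N₂ - 1 ∨ 2*Real.pi*N₁ + 1 < u →
        ‖∫ ω, Complex.exp (Complex.I * (u * X ω)) ∂P‖ < ε := by
      intro u hu
      set y : ℝ := u / (2*Real.pi) with hy
      set n : ℤ := ⌊y⌋ with hn
      set s : ℝ := 2*Real.pi * Int.fract y with hs
      have hs0 : 0 ≤ s := mul_nonneg hππ.le (Int.fract_nonneg y)
      have hs2 : s ≤ 2*Real.pi := by
        rw [hs]
        nlinarith [Int.fract_lt_one y, Int.fract_nonneg y]
      set j : ℕ := ⌊s/δ⌋₊ with hj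
      have hjm : j ∈ Finset.range (m+1) := by
        rw [Finset.mem_range, Nat.lt_succ_iff, hj, hm]
        exact le_trans (Nat.floor_mono (by gcongr)) (Nat.floor_le_ceil _)
      set r : ℝ := s - j*δ with hr
      have hjs : (j:ℝ)*δ ≤ s := by
        have h1 : (j:ℝ) ≤ s/δ := Nat.floor_le (div_nonneg hs0 hδpos.le)
        calc (j:ℝ)*δ ≤ (s/δ)*δ := by gcongr
          _ = s := div_mul_cancel₀ s hδpos.ne'
      have hr0 : 0 ≤ r := by rw [hr]; linarith
      have hrδ : r < δ := by
        have h1 : s/δ < j+1 := Nat.lt_floor_add_one (s/δ)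
        have h2 : s < ((j:ℝ)+1)*δ := by
          rw [← div_lt_iff₀ hδpos]
          exact_mod_cast h1
        rw [hr]; nlinarith
      have huv : u = (2*Real.pi*n + j*δ) + r := by
        have h1 : 2*Real.pi*(n:ℝ) + s = u := by
          rw [hs, hn, hy, ← mul_add, Int.floor_add_fract, mul_comm,
            div_mul_cancel₀ u hππ.ne']
        rw [hr]; linarith
      have hNcase : ∀ i ∈ Finset.range (m+1),
          ‖∫ ω, Complex.exp (Complex.I * ((2*Real.pi*n + i*δ) * X ω)) ∂P‖ < ε/2 := by
        rcases hu with h | h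
        · refine hN₂ n ?_
          have hyN : y ≤ (N₂:ℝ) := by
            rw [hy, div_le_iff₀ hππ]; nlinarith
          have := Int.floor_le_floor hyN
          rwa [Int.floor_intCast] at this
        · refine hN₁ n ?_
          have hyN : (N₁:ℝ) ≤ y := by
            rw [hy, le_div_iff₀ hππ]; nlinarith
          exact Int.le_floor.mpr hyN
      have hfirst := hNcase j hjm
      have hint1 := int_exp P X hX u
      have hint2 := int_exp P X hX (2*Real.pi*n + j*δ)
      push_cast at hint2
      have hdiff : ‖(∫ ω, Complex.exp (Complex.I * (u * X ω)) ∂P)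
          - ∫ ω, Complex.exp (Complex.I * ((2*Real.pi*n + j*δ) * X ω)) ∂P‖
          ≤ ∫ ω, ‖Complex.exp (Complex.I * (r * X ω)) - 1‖ ∂P := by
        rw [← integral_sub hint1 hint2]
        refine le_trans (norm_integral_le_integral_norm _) (le_of_eq ?_)
        congr 1; ext ω
        have hsplit : Complex.exp (Complex.I * (u * X ω))
            = Complex.exp (Complex.I * ((2*Real.pi*n + j*δ) * X ω))
              * Complex.exp (Complex.I * (r * X ω)) := by
          rw [← Complex.exp_add]
          congr 1
          rw [huv]
          push_cast
          ring
        have hfactor : Complex.exp (Complex.I * ((2*Real.pi*n + j*δ) * X ω))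
              * Complex.exp (Complex.I * (r * X ω))
            - Complex.exp (Complex.I * ((2*Real.pi*n + j*δ) * X ω))
            = Complex.exp (Complex.I * ((2*Real.pi*n + j*δ) * X ω))
              * (Complex.exp (Complex.I * (r * X ω)) - 1) := by ring
        rw [hsplit, hfactor, norm_mul]
        have h9 : ‖Complex.exp (Complex.I * ((2*Real.pi*n + j*δ) * X ω))‖ = 1 := by
          rw [Complex.norm_exp]
          simp [Complex.mul_re]
        rw [h9, one_mul]
      calc ‖∫ ω, Complex.exp (Complex.I * (u * X ω)) ∂P‖
          ≤ ‖∫ ω, Complex.exp (Complex.I * ((2*Real.pi*n + j*δ) * X ω)) ∂P‖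
            + ‖(∫ ω, Complex.exp (Complex.I * (u * X ω)) ∂P)
              - ∫ ω, Complex.exp (Complex.I * ((2*Real.pi*n + j*δ) * X ω)) ∂P‖ :=
          norm_le_insert' _ _
        _ < ε/2 + ε/2 :=
          add_lt_add_of_le_of_lt hfirst.le
            (lt_of_le_of_lt hdiff (hδ r (by rwa [abs_of_nonneg hr0])))
        _ = ε := by ring
    show {u : ℝ | ‖∫ ω, Complex.exp (Complex.I * (u * X ω)) ∂P‖ < ε} ∈ cocompact ℝ
    rw [mem_cocompact]
    refine ⟨Set.Icc (2*Real.pi*N₂ - 1) (2*Real.pi*N₁ + 1), isCompact_Icc, fun u hu => ?_⟩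
    simp only [Set.mem_compl_iff, Set.mem_Icc, not_and_or, not_le] at hu
    exact hmain u hu
end
end

section
/- Let ρ be a probability measure on [0,1) whose Fourier coefficients ρ̂(n) = ∫ e^{2πinx} dρ(x) tend to 0 as |n| → ∞ (ρ is Rajchman). Then for real (not just integer) frequencies, ∫ e^{2πiux} dρ(x) → 0 as |u| → ∞, u ∈ ℝ. -/
open MeasureTheory Filter

noncomputable section

namespace Stmt1Aux

open Set Submodule
open scoped ENNReal

set_option maxHeartbeats 1000000

/-- `e r = exp(2 π i r)` for real `r`. -/
def ee (r : ℝ) : ℂ := Complex.exp (2 * Real.pi * Complex.I * (r : ℂ))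

lemma norm_ee (r : ℝ) : ‖ee r‖ = 1 := by
  have h : (2 * (Real.pi:ℂ) * Complex.I * (r : ℂ)) = ((2 * Real.pi * r : ℝ) : ℂ) * Complex.I := by
    push_cast; ring
  rw [ee, h, Complex.norm_exp_ofReal_mul_I]

lemma ee_add (r s : ℝ) : ee (r + s) = ee r * ee s := by
  rw [ee, ee, ee, ← Complex.exp_add]
  congr 1
  push_cast; ring

lemma norm_ee_sub_ee (r s : ℝ) : ‖ee r - ee s‖ = ‖ee (r - s) - 1‖ := by
  have h : ee r - ee s = ee s * (ee (r - s) - 1) := by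
    rw [mul_sub, ← ee_add, mul_one]
    congr 2
    ring
  rw [h, norm_mul, norm_ee, one_mul]

lemma norm_ee_sub_one_le {r : ℝ} (h : |2 * Real.pi * r| ≤ 1) :
    ‖ee r - 1‖ ≤ 2 * |2 * Real.pi * r| := by
  have hz : (2 * (Real.pi:ℂ) * Complex.I * (r : ℂ)) = ((2 * Real.pi * r : ℝ) : ℂ) * Complex.I := by
    push_cast; ring
  have habs : ‖((2 * Real.pi * r : ℝ) : ℂ) * Complex.I‖ = |2 * Real.pi * r| := by
    rw [norm_mul, Complex.norm_I, Complex.norm_real, Real.norm_eq_abs, mul_one]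
  have := Complex.norm_exp_sub_one_le (x := ((2 * Real.pi * r : ℝ) : ℂ) * Complex.I)
    (by rw [habs]; exact h)
  rw [ee, hz]
  calc ‖Complex.exp (((2 * Real.pi * r : ℝ) : ℂ) * Complex.I) - 1‖
      ≤ 2 * ‖((2 * Real.pi * r : ℝ) : ℂ) * Complex.I‖ := this
    _ = 2 * |2 * Real.pi * r| := by rw [habs]

lemma integrable_of_bounded {ν : Measure ℝ} [IsFiniteMeasure ν] {g : ℝ → ℂ} (hg : Continuous g)
    (C : ℝ) (hC : ∀ x, ‖g x‖ ≤ C) : Integrable g ν :=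
  (integrable_const C).mono' hg.aestronglyMeasurable (ae_of_all _ hC)

lemma continuous_ee : Continuous ee :=
  Complex.continuous_exp.comp (continuous_const.mul Complex.continuous_ofReal)

/-- The Fourier transform of `ρ` at real frequency `u`. -/
def Fo (ρ : Measure ℝ) (u : ℝ) : ℂ := ∫ x, ee (u * x) ∂ρ

lemma integrable_ee (ρ : Measure ℝ) [IsFiniteMeasure ρ] (u : ℝ) :
    Integrable (fun x => ee (u * x)) ρ :=
  integrable_of_bounded (continuous_ee.comp (continuous_const.mul continuous_id))
    1 (fun x => le_of_eq (norm_ee _))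

lemma abs_ee (r : ℝ) : ‖ee r‖ = 1 := norm_ee r

local instance : Fact ((0:ℝ) < 1) := ⟨zero_lt_one⟩

lemma integrable_cont (μ : Measure (AddCircle (1:ℝ))) [IsFiniteMeasure μ]
    {g : AddCircle (1:ℝ) → ℂ} (hg : Continuous g) (C : ℝ) (hC : ∀ y, ‖g y‖ ≤ C) :
    Integrable g μ :=
  (integrable_const C).mono' hg.aestronglyMeasurable (ae_of_all _ hC)

lemma norm_fourier_apply (n : ℤ) (y : AddCircle (1:ℝ)) : ‖(fourier n) y‖ = 1 := by
  rw [fourier_apply]; exact Circle.norm_coe _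

lemma tendsto_cm_mul_fourier (μ : Measure (AddCircle (1:ℝ))) [IsFiniteMeasure μ]
    (hμ : Tendsto (fun n : ℤ => ∫ y, fourier n y ∂μ) (cocompact ℤ) (nhds 0))
    (G : C(AddCircle (1:ℝ), ℂ)) :
    Tendsto (fun n : ℤ => ∫ y, G y * fourier n y ∂μ) (cocompact ℤ) (nhds 0) := by
  have hintm : ∀ (P : C(AddCircle (1:ℝ), ℂ)) (n : ℤ),
      Integrable (fun y => P y * fourier n y) μ := fun P n =>
    integrable_cont μ (P.continuous.mul (fourier n).continuous) ‖P‖ (fun y => by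
      rw [norm_mul, norm_fourier_apply, mul_one]; exact P.norm_coe_le_norm y)
  have hspan : ∀ P : C(AddCircle (1:ℝ), ℂ), P ∈ span ℂ (Set.range (@fourier 1)) →
      Tendsto (fun n : ℤ => ∫ y, P y * fourier n y ∂μ) (cocompact ℤ) (nhds 0) := by
    intro P hP
    induction hP using span_induction with
    | mem x hx =>
        obtain ⟨k, rfl⟩ := hx
        have h1 : ∀ n : ℤ, (fun y => fourier k y * fourier n y)
            = fun y : AddCircle (1:ℝ) => fourier (k + n) y := by
          intro n; funext y; rw [← fourier_add]
        have h2 : Tendsto (fun n : ℤ => k + n) (cocompact ℤ) (cocompact ℤ) := by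
          rw [Filter.cocompact_eq_cofinite]
          exact (add_right_injective k).tendsto_cofinite
        simpa only [h1, Function.comp_def] using hμ.comp h2
    | zero => simpa using (tendsto_const_nhds : Tendsto (fun _ : ℤ => (0:ℂ)) _ _)
    | add x y hx hy ihx ihy =>
        have key : ∀ n : ℤ, ∫ yy, (x + y) yy * fourier n yy ∂μ
            = (∫ yy, x yy * fourier n yy ∂μ) + ∫ yy, y yy * fourier n yy ∂μ := by
          intro n
          rw [← integral_add (hintm x n) (hintm y n)]
          refine integral_congr_ae (ae_of_all _ fun yy => ?_)
          simp [add_mul]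
        simpa only [key, add_zero] using ihx.add ihy
    | smul c x hx ih =>
        have key : ∀ n : ℤ, ∫ yy, (c • x) yy * fourier n yy ∂μ
            = c • ∫ yy, x yy * fourier n yy ∂μ := by
          intro n
          rw [← integral_smul]
          refine integral_congr_ae (ae_of_all _ fun yy => ?_)
          simp only [ContinuousMap.smul_apply, smul_eq_mul]; ring
        simpa only [key, smul_zero] using ih.const_smul c
  rw [Metric.tendsto_nhds]
  intro ε hε
  have hG : G ∈ closure ((span ℂ (Set.range (@fourier 1)) : Submodule ℂ _) : Set _) := by
    rw [← Submodule.topologicalClosure_coe, span_fourier_closure_eq_top]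
    trivial
  set M : ℝ := (μ Set.univ).toReal with hM
  have hM0 : 0 ≤ M := ENNReal.toReal_nonneg
  have hε' : 0 < ε / 2 / (M + 1) := by positivity
  obtain ⟨P, hPmem, hPd⟩ := Metric.mem_closure_iff.mp hG _ hε'
  have hev := Metric.tendsto_nhds.mp (hspan P hPmem) (ε/2) (by positivity)
  filter_upwards [hev] with n hn
  rw [dist_zero_right] at hn ⊢
  have hsplit : ∫ y, G y * fourier n y ∂μ
      = (∫ y, (G y - P y) * fourier n y ∂μ) + ∫ y, P y * fourier n y ∂μ := by
    rw [← integral_add _ (hintm P n)]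
    · refine integral_congr_ae (ae_of_all _ fun y => ?_)
      ring
    · exact integrable_cont μ ((G.continuous.sub P.continuous).mul (fourier n).continuous)
        (‖G‖ + ‖P‖) (fun y => by
          rw [norm_mul, norm_fourier_apply, mul_one]
          exact (norm_sub_le _ _).trans
            (add_le_add (G.norm_coe_le_norm y) (P.norm_coe_le_norm y)))
  have hbound : ‖∫ y, (G y - P y) * fourier n y ∂μ‖ ≤ ε / 2 := by
    have h1 : ‖∫ y, (G y - P y) * fourier n y ∂μ‖ ≤ ∫ y, ‖(G y - P y) * fourier n y‖ ∂μ :=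
      norm_integral_le_integral_norm _
    have h2 : ∫ y, ‖(G y - P y) * fourier n y‖ ∂μ = ∫ y, ‖G y - P y‖ ∂μ := by
      refine integral_congr_ae (ae_of_all _ fun y => ?_)
      simp only [norm_mul, norm_fourier_apply, mul_one]
    have hint1 : Integrable (fun y => ‖G y - P y‖) μ :=
      (integrable_cont μ (G.continuous.sub P.continuous) (‖G‖ + ‖P‖) (fun y =>
        (norm_sub_le _ _).trans
          (add_le_add (G.norm_coe_le_norm y) (P.norm_coe_le_norm y)))).norm
    have h3 : ∫ y, ‖G y - P y‖ ∂μ ≤ ∫ _y, ε / 2 / (M + 1) ∂μ := by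
      refine integral_mono_ae hint1 (integrable_const _) (ae_of_all _ fun y => ?_)
      calc ‖G y - P y‖ = dist (G y) (P y) := by rw [dist_eq_norm]
        _ ≤ dist G P := ContinuousMap.dist_apply_le_dist y
        _ ≤ ε / 2 / (M + 1) := le_of_lt hPd
    have h4 : ∫ _y, ε / 2 / (M + 1) ∂μ = M * (ε / 2 / (M + 1)) := by
      rw [integral_const, smul_eq_mul, measureReal_def]
    have h5 : M * (ε / 2 / (M + 1)) ≤ ε / 2 := by
      rw [div_div, ← mul_div_assoc, div_le_div_iff₀ (by positivity) (by norm_num : (0:ℝ) < 2)]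
      nlinarith [mul_nonneg hM0 hε.le]
    linarith [h1, h2 ▸ h3]
  calc ‖∫ y, G y * fourier n y ∂μ‖
      ≤ ‖∫ y, (G y - P y) * fourier n y ∂μ‖ + ‖∫ y, P y * fourier n y ∂μ‖ := by
        rw [hsplit]; exact norm_add_le _ _
    _ < ε / 2 + ε / 2 := add_lt_add_of_le_of_lt hbound hn
    _ = ε := by ring


lemma lemD (ρ : Measure ℝ) [IsProbabilityMeasure ρ]
    (hsupp : ρ (Set.Ico (0:ℝ) 1)ᶜ = 0)
    (hRaj : Tendsto (fun n : ℤ => ∫ x, Complex.exp (2 * Real.pi * Complex.I * (n * x)) ∂ρ)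
      (cocompact ℤ) (nhds 0)) (t : ℝ) :
    Tendsto (fun n : ℤ => Fo ρ ((n : ℝ) + t)) (cocompact ℤ) (nhds 0) := by
  have hae : ∀ᵐ x ∂ρ, x ∈ Set.Ico (0:ℝ) 1 := by
    rw [ae_iff]; exact hsupp
  have hRaj' : Tendsto (fun n : ℤ => Fo ρ (n : ℝ)) (cocompact ℤ) (nhds 0) := by
    have heq : (fun n : ℤ => Fo ρ (n : ℝ))
        = fun n : ℤ => ∫ x, Complex.exp (2 * Real.pi * Complex.I * (n * x)) ∂ρ := by
      funext n
      unfold Fo ee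
      refine integral_congr_ae (ae_of_all _ fun x => ?_)
      norm_num
    rw [heq]; exact hRaj
  rw [Metric.tendsto_nhds]
  intro ε hε
  -- choose δ
  obtain ⟨δ, hδ0, hδ1, hδρ⟩ : ∃ δ : ℝ, 0 < δ ∧ δ ≤ 1 ∧ (ρ (Set.Ioo (1 - δ) 1)).toReal < ε / 8 := by
    set s : ℕ → Set ℝ := fun k => Set.Ioo (1 - 1/(k+1)) 1 with hs
    have hanti : Antitone s := by
      intro a b hab
      apply Set.Ioo_subset_Ioo _ le_rfl
      have h1 : (1:ℝ)/(b+1) ≤ 1/(a+1) := by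
        apply one_div_le_one_div_of_le (by positivity)
        exact_mod_cast Nat.add_le_add_right hab 1
      linarith
    have hempty : ⋂ k, s k = ∅ := by
      ext x
      simp only [Set.mem_iInter, Set.mem_Ioo, Set.mem_empty_iff_false, iff_false, not_forall]
      by_contra hcon
      push_neg at hcon
      have hx1 : x < 1 := (hcon 0).2
      obtain ⟨k, hk⟩ := exists_nat_one_div_lt (show (0:ℝ) < 1 - x by linarith)
      have := (hcon k).1
      linarith
    have htend := tendsto_measure_iInter_atTop (μ := ρ) (s := s)
      (fun k => measurableSet_Ioo.nullMeasurableSet) hanti ⟨0, measure_ne_top ρ _⟩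
    rw [hempty, measure_empty] at htend
    have h8 : (0:ℝ≥0∞) < ENNReal.ofReal (ε/8) := ENNReal.ofReal_pos.mpr (by linarith)
    obtain ⟨k, hk⟩ := (htend.eventually_lt_const h8).exists
    refine ⟨1/(k+1), by positivity, ?_, ?_⟩
    · rw [div_le_one (by positivity)]
      linarith [Nat.cast_nonneg (α := ℝ) k]
    · exact (ENNReal.lt_ofReal_iff_toReal_lt (measure_ne_top ρ _)).mp hk
  -- the cutoff function
  set c : ℝ := (1 - δ)/δ with hc
  have hc0 : 0 ≤ c := div_nonneg (by linarith) hδ0.le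
  set φ : ℝ → ℝ := fun x => min x (c * (1 - x)) with hφ
  set f : ℝ → ℂ := fun x => ee (t * φ x) with hfdef
  have hφcont : Continuous φ := continuous_id.min (continuous_const.mul (by continuity))
  have hfcont : Continuous f := continuous_ee.comp (continuous_const.mul hφcont)
  have hφ_eq : ∀ x : ℝ, x ≤ 1 - δ → φ x = x := by
    intro x hx
    apply min_eq_left
    rw [hc, div_mul_eq_mul_div, le_div_iff₀ hδ0]
    nlinarith
  have hφ0 : φ 0 = 0 := by
    simp only [hφ]
    rw [sub_zero, mul_one]
    exact min_eq_left hc0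
  have hφ1 : φ 1 = 0 := by
    simp only [hφ]
    rw [sub_self, mul_zero]
    exact min_eq_right zero_le_one
  have hf01 : f 0 = f (0 + 1) := by
    simp only [hfdef, zero_add, hφ0, hφ1]
  have hHcont : Continuous (AddCircle.liftIco 1 0 f) :=
    AddCircle.liftIco_continuous hf01 hfcont.continuousOn
  set G : C(AddCircle (1:ℝ), ℂ) := ⟨AddCircle.liftIco 1 0 f, hHcont⟩ with hG
  -- the pushforward measure
  have hmeas : Measurable ((↑) : ℝ → AddCircle (1:ℝ)) := AddCircle.measurable_mk'
  set μ : Measure (AddCircle (1:ℝ)) := ρ.map ((↑) : ℝ → AddCircle (1:ℝ)) with hμdef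
  haveI : IsProbabilityMeasure μ := Measure.isProbabilityMeasure_map hmeas.aemeasurable
  have hmap : ∀ g : AddCircle (1:ℝ) → ℂ, Continuous g →
      ∫ y, g y ∂μ = ∫ x, g ((x : ℝ) : AddCircle (1:ℝ)) ∂ρ := fun g hg =>
    integral_map hmeas.aemeasurable hg.aestronglyMeasurable
  have hfour : ∀ (n : ℤ) (x : ℝ), fourier n ((x : ℝ) : AddCircle (1:ℝ)) = ee ((n:ℝ) * x) := by
    intro n x
    rw [fourier_coe_apply]
    unfold ee
    congr 1
    push_cast
    ring
  have hμRaj : Tendsto (fun n : ℤ => ∫ y, fourier n y ∂μ) (cocompact ℤ) (nhds 0) := by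
    have heq : (fun n : ℤ => ∫ y, fourier n y ∂μ) = fun n : ℤ => Fo ρ (n : ℝ) := by
      funext n
      rw [hmap _ (fourier n).continuous]
      exact integral_congr_ae (ae_of_all _ fun x => hfour n x)
    rw [heq]; exact hRaj'
  have T1 := tendsto_cm_mul_fourier μ hμRaj G
  have hGint : ∀ n : ℤ, ∫ y, G y * fourier n y ∂μ = ∫ x, f x * ee ((n:ℝ) * x) ∂ρ := by
    intro n
    rw [hmap (fun y => G y * fourier n y) (G.continuous.mul (fourier n).continuous)]
    refine integral_congr_ae ?_
    filter_upwards [hae] with x hx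
    rw [hfour]
    congr 1
    show AddCircle.liftIco 1 0 f ↑x = f x
    exact AddCircle.liftIco_zero_coe_apply hx
  have hev := Metric.tendsto_nhds.mp T1 (ε/2) (by positivity)
  filter_upwards [hev] with n hn
  rw [dist_zero_right] at hn ⊢
  rw [hGint] at hn
  -- split the integral
  have hint1 : Integrable (fun x => f x * ee ((n:ℝ) * x)) ρ :=
    integrable_of_bounded (hfcont.mul (continuous_ee.comp (continuous_const.mul continuous_id)))
      1 (fun x => by simp [norm_mul, hfdef, abs_ee])
  have hint2 : Integrable (fun x => (ee (t * x) - f x) * ee ((n:ℝ) * x)) ρ :=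
    integrable_of_bounded
      (((continuous_ee.comp (continuous_const.mul continuous_id)).sub hfcont).mul
        (continuous_ee.comp (continuous_const.mul continuous_id)))
      2 (fun x => by
        rw [norm_mul, norm_ee, mul_one]
        refine (norm_sub_le _ _).trans ?_
        simp only [hfdef, norm_ee]
        norm_num)
  have hsplit : Fo ρ ((n : ℝ) + t)
      = (∫ x, f x * ee ((n:ℝ) * x) ∂ρ) + ∫ x, (ee (t * x) - f x) * ee ((n:ℝ) * x) ∂ρ := by
    rw [← integral_add hint1 hint2]
    refine integral_congr_ae (ae_of_all _ fun x => ?_)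
    show ee (((n:ℝ) + t) * x) = f x * ee ((n:ℝ) * x) + (ee (t * x) - f x) * ee ((n:ℝ) * x)
    have h1 : ((n:ℝ) + t) * x = (n:ℝ) * x + t * x := by ring
    rw [h1, ee_add]
    ring
  have hbound : ‖∫ x, (ee (t * x) - f x) * ee ((n:ℝ) * x) ∂ρ‖ ≤ ε / 4 := by
    have h1 := norm_integral_le_integral_norm (fun x => (ee (t * x) - f x) * ee ((n:ℝ) * x)) (μ := ρ)
    have h2 : ∫ x, ‖(ee (t * x) - f x) * ee ((n:ℝ) * x)‖ ∂ρ
        = ∫ x, ‖ee (t * x) - f x‖ ∂ρ := by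
      refine integral_congr_ae (ae_of_all _ fun x => ?_)
      simp [norm_mul, abs_ee]
    have h3 : ∫ x, ‖ee (t * x) - f x‖ ∂ρ
        ≤ ∫ x, Set.indicator (Set.Ioo (1-δ) 1) (fun _ => (2:ℝ)) x ∂ρ := by
      refine integral_mono_ae (hint2.norm.congr ?_) ((integrable_const 2).indicator measurableSet_Ioo) ?_
      · refine ae_of_all _ fun x => ?_
        simp [norm_mul, abs_ee]
      · filter_upwards [hae] with x hx
        by_cases hxd : x ≤ 1 - δ
        · have : f x = ee (t * x) := by rw [hfdef]; simp only; rw [hφ_eq x hxd]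
          rw [this, sub_self, norm_zero]
          exact Set.indicator_nonneg (fun _ _ => by norm_num) x
        · push_neg at hxd
          have hmem : x ∈ Set.Ioo (1-δ) 1 := ⟨hxd, hx.2⟩
          rw [Set.indicator_of_mem hmem]
          refine (norm_sub_le _ _).trans ?_
          simp only [hfdef, norm_ee]
          norm_num
    have h4 : ∫ x, Set.indicator (Set.Ioo (1-δ) 1) (fun _ => (2:ℝ)) x ∂ρ
        = (ρ (Set.Ioo (1-δ) 1)).toReal * 2 := by
      rw [integral_indicator_const _ measurableSet_Ioo, smul_eq_mul, measureReal_def]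
    have h5 : (ρ (Set.Ioo (1-δ) 1)).toReal * 2 ≤ ε / 4 := by nlinarith
    linarith [h1, h2, h3, h4, h5]
  rw [hsplit]
  calc ‖(∫ x, f x * ee ((n:ℝ) * x) ∂ρ) + ∫ x, (ee (t * x) - f x) * ee ((n:ℝ) * x) ∂ρ‖
      ≤ ‖∫ x, f x * ee ((n:ℝ) * x) ∂ρ‖ + ‖∫ x, (ee (t * x) - f x) * ee ((n:ℝ) * x) ∂ρ‖ :=
        norm_add_le _ _
    _ < ε/2 + ε/4 := add_lt_add_of_lt_of_le hn hbound
    _ < ε := by linarith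


lemma approx (ρ : Measure ℝ) [IsProbabilityMeasure ρ]
    (hsupp : ρ (Set.Ico (0:ℝ) 1)ᶜ = 0)
    (m : ℕ) (hm : 2 * Real.pi ≤ m) (u : ℝ) :
    ∃ j : ℕ, j < m ∧ ‖Fo ρ u - Fo ρ ((⌊u⌋ : ℝ) + j / m)‖ ≤ 4 * Real.pi / m := by
  have hae : ∀ᵐ x ∂ρ, x ∈ Set.Ico (0:ℝ) 1 := by rw [ae_iff]; exact hsupp
  have hmpos : (0:ℝ) < m := lt_of_lt_of_le (by positivity) hm
  set t : ℝ := Int.fract u with ht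
  have ht0 : 0 ≤ t := Int.fract_nonneg u
  have ht1 : t < 1 := Int.fract_lt_one u
  have htm : 0 ≤ t * m := mul_nonneg ht0 hmpos.le
  set j : ℕ := ⌊t * m⌋.toNat with hj
  have hjcast : (j : ℝ) = (⌊t * m⌋ : ℝ) := by
    rw [hj]
    norm_cast
    exact Int.toNat_of_nonneg (Int.floor_nonneg.mpr htm)
  have hjle : (j : ℝ) ≤ t * m := by rw [hjcast]; exact Int.floor_le _
  have hjgt : t * m < (j : ℝ) + 1 := by rw [hjcast]; exact Int.lt_floor_add_one _
  have hjm : j < m := by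
    have : (j : ℝ) < m := lt_of_le_of_lt hjle (by nlinarith)
    exact_mod_cast this
  refine ⟨j, hjm, ?_⟩
  -- the frequency difference
  set s : ℝ := t - j / m with hs
  have hs0 : 0 ≤ s := by
    rw [hs, sub_nonneg, div_le_iff₀ hmpos]
    linarith
  have hs1 : s ≤ 1 / m := by
    rw [hs, sub_le_iff_le_add]
    have h1 : t ≤ ((j:ℝ) + 1) / m := by
      rw [le_div_iff₀ hmpos]
      linarith [hjgt.le]
    calc t ≤ ((j:ℝ) + 1) / m := h1
      _ = 1 / m + (j:ℝ) / m := by ring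
  have hu : u = (⌊u⌋ : ℝ) + t := (Int.floor_add_fract u).symm
  have hdiff : ∀ x : ℝ, u * x - ((⌊u⌋ : ℝ) + j / m) * x = s * x := by
    intro x
    rw [hs, ht, Int.fract]
    ring
  have hbound : ∀ x : ℝ, x ∈ Set.Ico (0:ℝ) 1 → ‖ee (u * x) - ee (((⌊u⌋ : ℝ) + j / m) * x)‖ ≤ 4 * Real.pi / m := by
    intro x hx
    rw [norm_ee_sub_ee, hdiff]
    have hsx0 : 0 ≤ s * x := mul_nonneg hs0 hx.1
    have hsx : s * x ≤ 1 / m := by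
      calc s * x ≤ s * 1 := mul_le_mul_of_nonneg_left hx.2.le hs0
        _ = s := mul_one s
        _ ≤ 1 / m := hs1
    have habs : |2 * Real.pi * (s * x)| ≤ 2 * Real.pi / m := by
      rw [abs_of_nonneg (mul_nonneg (by positivity) hsx0)]
      calc 2 * Real.pi * (s * x) ≤ 2 * Real.pi * (1/m) :=
            mul_le_mul_of_nonneg_left hsx (by positivity)
        _ = 2 * Real.pi / m := by ring
    have h1 : |2 * Real.pi * (s * x)| ≤ 1 := by
      refine habs.trans ?_
      rw [div_le_one hmpos]
      exact hm
    calc ‖ee (s * x) - 1‖ ≤ 2 * |2 * Real.pi * (s * x)| := norm_ee_sub_one_le h1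
      _ ≤ 2 * (2 * Real.pi / m) := by linarith
      _ = 4 * Real.pi / m := by ring
  -- integral estimate
  have hFsub : Fo ρ u - Fo ρ ((⌊u⌋ : ℝ) + j / m)
      = ∫ x, (ee (u * x) - ee (((⌊u⌋ : ℝ) + j / m) * x)) ∂ρ := by
    rw [Fo, Fo, ← integral_sub (integrable_ee ρ _) (integrable_ee ρ _)]
  rw [hFsub]
  calc ‖∫ x, (ee (u * x) - ee (((⌊u⌋ : ℝ) + j / m) * x)) ∂ρ‖
      ≤ ∫ x, ‖ee (u * x) - ee (((⌊u⌋ : ℝ) + j / m) * x)‖ ∂ρ := norm_integral_le_integral_norm _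
    _ ≤ ∫ _x, 4 * Real.pi / m ∂ρ := by
        refine integral_mono_ae (((integrable_ee ρ _).sub (integrable_ee ρ _)).norm)
          (integrable_const _) ?_
        filter_upwards [hae] with x hx
        exact hbound x hx
    _ = 4 * Real.pi / m := by
        rw [integral_const]
        simp

end Stmt1Aux

open Stmt1Aux in
/-- If `ρ` is a probability measure on `[0,1)` whose Fourier
coefficients at integer frequencies tend to `0` (Rajchman), then its Fourier
transform at real frequencies `u` also tends to `0` as `|u| → ∞`. -/
theorem stmt1 (ρ : Measure ℝ) [IsProbabilityMeasure ρ]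
    (hsupp : ρ (Set.Ico (0:ℝ) 1)ᶜ = 0)
    (hRaj : Tendsto (fun n : ℤ => ∫ x, Complex.exp (2 * Real.pi * Complex.I * (n * x)) ∂ρ)
      (cocompact ℤ) (nhds 0)) :
    Tendsto (fun u : ℝ => ∫ x, Complex.exp (2 * Real.pi * Complex.I * (u * x)) ∂ρ)
      (cocompact ℝ) (nhds 0) := by
  have hFo : (fun u : ℝ => ∫ x, Complex.exp (2 * Real.pi * Complex.I * (u * x)) ∂ρ)
      = fun u : ℝ => Fo ρ u := by
    funext u
    unfold Fo ee
    refine integral_congr_ae (ae_of_all _ fun x => ?_)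
    norm_num
  rw [hFo]
  rw [Metric.tendsto_nhds]
  intro ε hε
  obtain ⟨m, hm⟩ := exists_nat_ge (max (2 * Real.pi) (16 * Real.pi / ε))
  have hm1 : 2 * Real.pi ≤ m := le_trans (le_max_left _ _) hm
  have hmpos : (0:ℝ) < m := lt_of_lt_of_le (by positivity) hm1
  have hm2 : 4 * Real.pi / m ≤ ε / 4 := by
    have h16 : 16 * Real.pi / ε ≤ m := le_trans (le_max_right _ _) hm
    rw [div_le_iff₀ hmpos]
    calc 4 * Real.pi = ε / 4 * (16 * Real.pi / ε) := by field_simp; ring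
      _ ≤ ε / 4 * m := by gcongr
      _ = ε / 4 * m := rfl
  have hevent : ∀ᶠ n : ℤ in cocompact ℤ,
      ∀ j ∈ Finset.range m, ‖Fo ρ ((n:ℝ) + (j:ℝ) / m)‖ < ε / 2 := by
    rw [eventually_all_finset]
    intro j _
    have h := Metric.tendsto_nhds.mp (lemD ρ hsupp hRaj ((j:ℝ)/m)) (ε/2) (by positivity)
    simpa [dist_zero_right] using h
  have hfloor : Tendsto (fun u : ℝ => ⌊u⌋) (cocompact ℝ) (cocompact ℤ) := by
    rw [cocompact_eq_atBot_atTop, cocompact_eq_atBot_atTop, tendsto_sup]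
    constructor
    · exact tendsto_floor_atBot.mono_right le_sup_left
    · exact tendsto_floor_atTop.mono_right le_sup_right
  filter_upwards [hfloor.eventually hevent] with u hu
  obtain ⟨j, hjm, hj⟩ := approx ρ hsupp m hm1 u
  rw [dist_zero_right]
  have h1 : ‖Fo ρ ((⌊u⌋ : ℝ) + (j:ℝ) / m)‖ < ε / 2 := hu j (Finset.mem_range.mpr hjm)
  have h2 : ‖Fo ρ u‖ ≤ ‖Fo ρ ((⌊u⌋ : ℝ) + (j:ℝ) / m)‖ + ‖Fo ρ u - Fo ρ ((⌊u⌋ : ℝ) + (j:ℝ) / m)‖ := by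
    have h3 := norm_add_le (Fo ρ ((⌊u⌋ : ℝ) + (j:ℝ) / m)) (Fo ρ u - Fo ρ ((⌊u⌋ : ℝ) + (j:ℝ) / m))
    simpa using h3
  calc ‖Fo ρ u‖ ≤ ‖Fo ρ ((⌊u⌋ : ℝ) + (j:ℝ) / m)‖ + ‖Fo ρ u - Fo ρ ((⌊u⌋ : ℝ) + (j:ℝ) / m)‖ := h2
    _ < ε / 2 + ε / 4 := add_lt_add_of_lt_of_le h1 (hj.trans hm2)
    _ < ε := by linarith
end
end

section
/- The set of Rajchman measures on the torus is a band: if μ is a Rajchman measure and ν is a measure absolutely continuous with respect to |μ|, then ν is Rajchman. -/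
open MeasureTheory Filter

/-- The `n`-th Fourier coefficient of a signed measure on the torus. -/
noncomputable def signedFourierCoeff (μ : MeasureTheory.SignedMeasure (AddCircle (1:ℝ)))
    (n : ℤ) : ℂ :=
  (∫ x, fourier n x ∂μ.toJordanDecomposition.posPart) -
    ∫ x, fourier n x ∂μ.toJordanDecomposition.negPart

/-- A signed measure on the torus is Rajchman if its Fourier coefficients tend to `0`. -/
def IsRajchman (μ : MeasureTheory.SignedMeasure (AddCircle (1:ℝ))) : Prop :=
  Tendsto (fun n : ℤ => signedFourierCoeff μ n) (cocompact ℤ) (nhds 0)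

open Set in
/-- A continuous function times a bounded measurable function is integrable. -/
lemma fourier_mul_integrable (σ : Measure (AddCircle (1:ℝ))) [IsFiniteMeasure σ]
    {s : AddCircle (1:ℝ) → ℂ} (hs_meas : Measurable s) (hs_norm : ∀ x, ‖s x‖ = 1)
    (h : C(AddCircle (1:ℝ), ℂ)) (n : ℤ) :
    Integrable (fun x => fourier n x * h x * s x) σ := by
  have hs_int : Integrable s σ :=
    (integrable_const (1:ℝ)).mono' hs_meas.aestronglyMeasurable
      (Filter.Eventually.of_forall fun x => (hs_norm x).le)
  have := hs_int.bdd_mul ((fourier n * h : C(AddCircle (1:ℝ), ℂ)).continuous).aestronglyMeasurable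
    (Filter.Eventually.of_forall
      fun x => (fourier n * h : C(AddCircle (1:ℝ), ℂ)).norm_coe_le_norm x)
  simpa [mul_assoc] using this

open Set in
/-- The key analytic lemma: on a finite measure `σ` on the circle, if the "signed" Fourier
coefficients `∫ fourier n * s dσ` (where `s` is a unimodular sign function) tend to zero, then
so do the Fourier coefficients of `k • σ` for any integrable density `k`. -/
lemma key_tendsto (σ : Measure (AddCircle (1:ℝ))) [IsFiniteMeasure σ]
    (s : AddCircle (1:ℝ) → ℂ) (hs_meas : Measurable s)
    (hs_sq : ∀ x, s x * s x = 1) (hs_norm : ∀ x, ‖s x‖ = 1)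
    (hμ : Tendsto (fun n : ℤ => ∫ x, fourier n x * s x ∂σ) (cocompact ℤ) (nhds 0))
    (k : AddCircle (1:ℝ) → ℂ) (hk : Integrable k σ) :
    Tendsto (fun n : ℤ => ∫ x, fourier n x * k x ∂σ) (cocompact ℤ) (nhds 0) := by
  have hs_int : Integrable s σ :=
    (integrable_const (1:ℝ)).mono' hs_meas.aestronglyMeasurable
      (Filter.Eventually.of_forall fun x => (hs_norm x).le)
  -- the span property
  have claim : ∀ T : C(AddCircle (1:ℝ), ℂ), T ∈ Submodule.span ℂ (Set.range (@fourier 1)) →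
      Tendsto (fun n : ℤ => ∫ x, fourier n x * T x * s x ∂σ) (cocompact ℤ) (nhds 0) := by
    intro T hT
    induction hT using Submodule.span_induction with
    | mem T hTm =>
        obtain ⟨m, rfl⟩ := hTm
        have hshift : Tendsto (fun n : ℤ => n + m) (cocompact ℤ) (cocompact ℤ) := by
          rw [cocompact_eq_cofinite]
          exact (add_left_injective m).tendsto_cofinite
        have := hμ.comp hshift
        refine this.congr fun n => ?_
        simp only [Function.comp]
        refine integral_congr_ae (Filter.Eventually.of_forall fun x => ?_)
        simp [fourier_add]
    | zero => simpa using tendsto_const_nhds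
    | add T₁ T₂ h₁ h₂ ih₁ ih₂ =>
        have := ih₁.add ih₂
        rw [add_zero] at this
        refine this.congr fun n => ?_
        rw [← integral_add (fourier_mul_integrable σ hs_meas hs_norm T₁ n)
          (fourier_mul_integrable σ hs_meas hs_norm T₂ n)]
        refine integral_congr_ae (Filter.Eventually.of_forall fun x => ?_)
        simp only [ContinuousMap.add_apply]
        ring
    | smul c T hTm ih =>
        have := ih.const_smul c
        rw [smul_zero] at this
        refine this.congr fun n => ?_
        rw [← integral_smul]
        refine integral_congr_ae (Filter.Eventually.of_forall fun x => ?_)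
        simp only [ContinuousMap.smul_apply, smul_eq_mul]
        ring
  rw [NormedAddCommGroup.tendsto_nhds_zero]
  intro ε hε
  -- approximate k * s in L¹ by a trig polynomial
  set k' : AddCircle (1:ℝ) → ℂ := fun x => k x * s x with hk'def
  have hk' : Integrable k' σ := by
    have := hk.bdd_mul hs_meas.aestronglyMeasurable (Filter.Eventually.of_forall fun x => (hs_norm x).le)
    exact this.congr (Filter.Eventually.of_forall fun x => mul_comm _ _)
  obtain ⟨g, hg_int, hg_mem⟩ := hk'.exists_boundedContinuous_integral_sub_le
    (show (0:ℝ) < ε/8 by linarith)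
  set δ : ℝ := (ε/8) / ((σ Set.univ).toReal + 1) with hδdef
  have hσ : 0 ≤ (σ Set.univ).toReal := ENNReal.toReal_nonneg
  have hδ : 0 < δ := by positivity
  have hgc : (g.toContinuousMap) ∈ closure
      ((Submodule.span ℂ (Set.range (@fourier 1)) : Submodule ℂ C(AddCircle (1:ℝ), ℂ)) : Set _) := by
    rw [← Submodule.topologicalClosure_coe, span_fourier_closure_eq_top]
    trivial
  obtain ⟨T, hT_mem, hT_dist⟩ := Metric.mem_closure_iff.mp hgc δ hδ
  -- L¹ bound for k' - T
  have hL1 : ∫ x, ‖k' x - T x‖ ∂σ ≤ ε/4 := by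
    have hTi : Integrable (fun x => T x) σ :=
      T.continuous.integrable_of_hasCompactSupport (HasCompactSupport.of_compactSpace _)
    have hgi : Integrable (fun x => g x) σ :=
      g.continuous.integrable_of_hasCompactSupport (HasCompactSupport.of_compactSpace _)
    have h1 : ∫ x, ‖k' x - T x‖ ∂σ ≤ ∫ x, (‖k' x - g x‖ + ‖g x - T x‖) ∂σ := by
      refine integral_mono_of_nonneg (Filter.Eventually.of_forall fun x => norm_nonneg _)
        (((hk'.sub hgi).norm).add ((hgi.sub hTi).norm))
        (Filter.Eventually.of_forall fun x => ?_)
      calc ‖k' x - T x‖ = ‖(k' x - g x) + (g x - T x)‖ := by ring_nf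
        _ ≤ ‖k' x - g x‖ + ‖g x - T x‖ := norm_add_le _ _
    have h2 : ∫ x, ‖g x - T x‖ ∂σ ≤ δ * (σ Set.univ).toReal := by
      have hb : ∀ x, ‖g x - T x‖ ≤ δ := fun x =>
        le_trans ((dist_eq_norm (g x) (T x)).symm.le.trans (ContinuousMap.dist_apply_le_dist (f := g.toContinuousMap) (g := T) x)) hT_dist.le
      calc ∫ x, ‖g x - T x‖ ∂σ ≤ ∫ _x, δ ∂σ :=
            integral_mono_of_nonneg (Filter.Eventually.of_forall fun x => norm_nonneg _)
              (integrable_const δ) (Filter.Eventually.of_forall hb)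
        _ = (σ Set.univ).toReal * δ := by rw [integral_const, smul_eq_mul]; rfl
        _ = δ * (σ Set.univ).toReal := mul_comm _ _
    have h3 : δ * (σ Set.univ).toReal ≤ ε/8 := by
      rw [hδdef]
      rw [div_mul_eq_mul_div, div_le_iff₀ (by positivity)]
      nlinarith
    have h4 : ∫ x, (‖k' x - g x‖ + ‖g x - T x‖) ∂σ
        = (∫ x, ‖k' x - g x‖ ∂σ) + ∫ x, ‖g x - T x‖ ∂σ :=
      integral_add ((hk'.sub hgi).norm) ((hgi.sub hTi).norm)
    linarith
  -- decompose and conclude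
  have hTend := claim T hT_mem
  rw [NormedAddCommGroup.tendsto_nhds_zero] at hTend
  filter_upwards [hTend (ε/2) (by linarith)] with n hn
  have hdec : ∫ x, fourier n x * k x ∂σ
      = (∫ x, fourier n x * T x * s x ∂σ) + ∫ x, fourier n x * (k' x - T x) * s x ∂σ := by
    have hTi : Integrable (fun x => T x) σ :=
      T.continuous.integrable_of_hasCompactSupport (HasCompactSupport.of_compactSpace _)
    have hBi : Integrable (fun x => fourier n x * (k' x - T x) * s x) σ := by
      have hf : Integrable (fun x => k' x - T x) σ := hk'.sub hTi
      have := hf.bdd_mul ((map_continuous (fourier n)).measurable.mul hs_meas).aestronglyMeasurable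
        (c := 1) (Filter.Eventually.of_forall fun x => by
          rw [Pi.mul_apply, norm_mul, hs_norm]
          simp [Circle.norm_coe])
      exact this.congr (Filter.Eventually.of_forall fun x => by simp only [Pi.mul_apply]; ring)
    rw [← integral_add (fourier_mul_integrable σ hs_meas hs_norm T n) hBi]
    refine integral_congr_ae (Filter.Eventually.of_forall fun x => ?_)
    have h := hs_sq x
    simp only [hk'def]
    linear_combination (-(fourier n x * k x)) * h
  rw [hdec]
  have hB : ‖∫ x, fourier n x * (k' x - T x) * s x ∂σ‖ ≤ ε/4 := by
    refine le_trans (norm_integral_le_integral_norm _) (le_trans (le_of_eq ?_) hL1)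
    refine integral_congr_ae (Filter.Eventually.of_forall fun x => ?_)
    show ‖fourier n x * (k' x - T x) * s x‖ = ‖k' x - T x‖
    rw [norm_mul, norm_mul, hs_norm]
    simp [Circle.norm_coe]
  calc ‖(∫ x, fourier n x * T x * s x ∂σ) + ∫ x, fourier n x * (k' x - T x) * s x ∂σ‖
      ≤ ‖∫ x, fourier n x * T x * s x ∂σ‖ + ‖∫ x, fourier n x * (k' x - T x) * s x ∂σ‖ :=
        norm_add_le _ _
    _ < ε := by linarith

open Set in
/-- The Fourier coefficients of a signed measure can be written as integrals of
`fourier n * s` against the total variation, for a unimodular sign function `s`. -/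
lemma exists_sign_fun (μ : MeasureTheory.SignedMeasure (AddCircle (1:ℝ))) :
    ∃ s : AddCircle (1:ℝ) → ℂ, Measurable s ∧ (∀ x, s x * s x = 1) ∧ (∀ x, ‖s x‖ = 1) ∧
    ∀ n : ℤ, signedFourierCoeff μ n = ∫ x, fourier n x * s x ∂μ.totalVariation := by
  obtain ⟨E, hEm, hE1, hE2⟩ := μ.toJordanDecomposition.mutuallySingular
  set A : Set (AddCircle (1:ℝ)) := Eᶜ with hA
  have hAm : MeasurableSet A := hEm.compl
  have hp : μ.toJordanDecomposition.posPart = μ.totalVariation.restrict A := by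
    rw [MeasureTheory.SignedMeasure.totalVariation, Measure.restrict_add,
      Measure.restrict_eq_zero.mpr hE2, add_zero,
      Measure.restrict_eq_self_of_ae_mem]
    rw [Filter.eventually_iff, mem_ae_iff]
    show μ.toJordanDecomposition.posPart Aᶜ = 0
    rw [hA, compl_compl]; exact hE1
  have hq : μ.toJordanDecomposition.negPart = μ.totalVariation.restrict Aᶜ := by
    rw [MeasureTheory.SignedMeasure.totalVariation, Measure.restrict_add,
      Measure.restrict_eq_zero.mpr (by simpa [hA] using hE1), zero_add,
      Measure.restrict_eq_self_of_ae_mem]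
    rw [Filter.eventually_iff, mem_ae_iff]
    show μ.toJordanDecomposition.negPart Aᶜᶜ = 0
    rw [compl_compl, hA]; exact hE2
  refine ⟨fun x => A.indicator (fun _ => (1:ℂ)) x - Aᶜ.indicator (fun _ => (1:ℂ)) x,
    (measurable_const.indicator hAm).sub (measurable_const.indicator hAm.compl),
    fun x => ?_, fun x => ?_, fun n => ?_⟩
  · by_cases h : x ∈ A <;> simp [indicator, h]
  · by_cases h : x ∈ A <;> simp [indicator, h]
  · haveI : IsFiniteMeasure μ.totalVariation := by
      unfold MeasureTheory.SignedMeasure.totalVariation; infer_instance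
    have hfi : Integrable (fun x => fourier n x) μ.totalVariation :=
      (map_continuous (fourier n)).integrable_of_hasCompactSupport
        (HasCompactSupport.of_compactSpace _)
    rw [signedFourierCoeff, hp, hq, ← integral_indicator hAm, ← integral_indicator hAm.compl,
      ← integral_sub (hfi.indicator hAm) (hfi.indicator hAm.compl)]
    refine integral_congr_ae (Filter.Eventually.of_forall fun x => ?_)
    by_cases h : x ∈ A <;> simp [indicator, h]

open Set in
/-- A signed measure absolutely continuous w.r.t. a finite measure has a density,
expressed at the level of Fourier coefficients. -/
lemma exists_density_fun (μ ν : MeasureTheory.SignedMeasure (AddCircle (1:ℝ)))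
    (hν : ν.totalVariation ≪ μ.totalVariation) :
    ∃ k : AddCircle (1:ℝ) → ℂ, Integrable k μ.totalVariation ∧
      ∀ n : ℤ, signedFourierCoeff ν n = ∫ x, fourier n x * k x ∂μ.totalVariation := by
  haveI : IsFiniteMeasure μ.totalVariation := by
    unfold MeasureTheory.SignedMeasure.totalVariation; infer_instance
  set σ := μ.totalVariation with hσ
  obtain ⟨hP, hQ⟩ := (MeasureTheory.SignedMeasure.totalVariation_absolutelyContinuous_iff ν _).mp hν
  set P := ν.toJordanDecomposition.posPart
  set Q := ν.toJordanDecomposition.negPart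
  refine ⟨fun x => ((P.rnDeriv σ x).toReal : ℂ) - ((Q.rnDeriv σ x).toReal : ℂ),
    ((Measure.integrable_toReal_rnDeriv).ofReal).sub ((Measure.integrable_toReal_rnDeriv).ofReal),
    fun n => ?_⟩
  have hfP : Integrable (fun x => fourier n x) P :=
    (map_continuous (fourier n)).integrable_of_hasCompactSupport
      (HasCompactSupport.of_compactSpace _)
  have hfQ : Integrable (fun x => fourier n x) Q :=
    (map_continuous (fourier n)).integrable_of_hasCompactSupport
      (HasCompactSupport.of_compactSpace _)
  rw [signedFourierCoeff,
    ← MeasureTheory.integral_rnDeriv_smul hP (f := fun x => (fourier n x : ℂ)),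
    ← MeasureTheory.integral_rnDeriv_smul hQ (f := fun x => (fourier n x : ℂ)),
    ← integral_sub ((MeasureTheory.integrable_rnDeriv_smul_iff hP).mpr hfP)
      ((MeasureTheory.integrable_rnDeriv_smul_iff hQ).mpr hfQ)]
  refine integral_congr_ae (Filter.Eventually.of_forall fun x => ?_)
  show (P.rnDeriv σ x).toReal • (fourier n x : ℂ) - (Q.rnDeriv σ x).toReal • (fourier n x : ℂ)
    = fourier n x * (((P.rnDeriv σ x).toReal : ℂ) - ((Q.rnDeriv σ x).toReal : ℂ))
  rw [Complex.real_smul, Complex.real_smul]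
  ring

/-- The set of Rajchman measures on the torus is a band: if `μ` is
Rajchman and `ν` is absolutely continuous with respect to `|μ|`, then `ν` is Rajchman. -/
theorem stmt2 (μ ν : MeasureTheory.SignedMeasure (AddCircle (1:ℝ)))
    (hμ : IsRajchman μ)
    (hν : ν.totalVariation ≪ μ.totalVariation) :
    IsRajchman ν := by
  haveI : IsFiniteMeasure μ.totalVariation := by
    unfold MeasureTheory.SignedMeasure.totalVariation; infer_instance
  obtain ⟨s, hs_meas, hs_sq, hs_norm, hs_eq⟩ := exists_sign_fun μ
  obtain ⟨k, hk, hk_eq⟩ := exists_density_fun μ ν hν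
  have hμ' : Tendsto (fun n : ℤ => ∫ x, fourier n x * s x ∂μ.totalVariation)
      (cocompact ℤ) (nhds 0) := hμ.congr fun n => hs_eq n
  have := key_tendsto μ.totalVariation s hs_meas hs_sq hs_norm hμ' k hk
  exact this.congr fun n => (hk_eq n).symm
end

section
/- Let Y be a bounded real random variable and Y_n^{(d)} = ⌊nY⌋/n its approximation by default on the 1/n-graduation. If the law of Y is Rajchman, then n(Y_n^{(d)} - Y) converges in distribution to −U where U is uniform on [0,1], and E[n(Y_n^{(d)} - Y)] → −1/2. -/
open MeasureTheory Filter Real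

noncomputable section

lemma vol_prob : IsProbabilityMeasure (volume : Measure (AddCircle (1:ℝ))) := by
  constructor
  rw [AddCircle.volume_eq_smul_haarAddCircle]
  simp [measure_univ]

lemma fract_coe (x : ℝ) : ((Int.fract x : ℝ) : AddCircle (1:ℝ)) = (x : AddCircle (1:ℝ)) := by
  rw [QuotientAddGroup.eq]
  refine AddSubgroup.mem_zmultiples_iff.mpr ⟨⌊x⌋, ?_⟩
  have := Int.fract_add_floor x
  push_cast
  simp only [zsmul_eq_mul]
  push_cast
  linarith [Int.fract_add_floor x]

lemma fourier_int (k : ℤ) (hk : k ≠ 0) :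
    ∫ x : AddCircle (1:ℝ), fourier k x ∂(volume) = 0 := by
  rw [← AddCircle.intervalIntegral_preimage (1:ℝ) 0 (fun x => fourier k x)]
  have : ∀ x : ℝ, fourier k (x : AddCircle (1:ℝ)) = Complex.exp ((2 * Real.pi * Complex.I * k) * x) := by
    intro x
    rw [fourier_coe_apply]
    congr 1
    push_cast
    ring
  simp only [this]
  have hc : (2 * Real.pi * Complex.I * k) ≠ 0 := by
    simp [Real.pi_ne_zero, Complex.I_ne_zero, hk]
  rw [zero_add, integral_exp_mul_complex hc]
  have : (2 * ↑Real.pi * Complex.I * ↑k) * (1:ℝ) = (k : ℂ) * (2 * ↑Real.pi * Complex.I) := by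
    push_cast; ring
  rw [this, Complex.exp_int_mul_two_pi_mul_I]
  simp


section

lemma integrable_comp_circle {Ω : Type*} [MeasurableSpace Ω] (P : Measure Ω)
    [IsProbabilityMeasure P] {E : Type*} [NormedAddCommGroup E]
    (f : C(AddCircle (1:ℝ), E)) {g : Ω → AddCircle (1:ℝ)} (hg : Measurable g) :
    Integrable (fun ω => f (g ω)) P := by
  refine ⟨(f.continuous.stronglyMeasurable.comp_measurable hg).aestronglyMeasurable, ?_⟩
  apply HasFiniteIntegral.of_bounded (C := ‖f‖)
  exact Filter.Eventually.of_forall (fun ω => f.norm_coe_le_norm (g ω))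

end

section
variable {Ω : Type*} [MeasurableSpace Ω] (P : Measure Ω) [IsProbabilityMeasure P]
  (Y : Ω → ℝ) (hY : Measurable Y)
include hY

lemma meas_T (n : ℕ) : Measurable (fun ω => (((n:ℝ) * Y ω : ℝ) : AddCircle (1:ℝ))) :=
  (AddCircle.measurable_mk' (a := (1:ℝ))).comp (hY.const_mul _)

lemma circle_conv_complex
    (hRaj : Tendsto (fun u : ℝ => ∫ ω, Complex.exp (Complex.I * (u * Y ω)) ∂P)
      (cocompact ℝ) (nhds 0))
    (f : C(AddCircle (1:ℝ), ℂ)) :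
    Tendsto (fun n : ℕ => ∫ ω, f (((n:ℝ) * Y ω : ℝ) : AddCircle (1:ℝ)) ∂P) atTop
      (nhds (∫ x : AddCircle (1:ℝ), f x ∂volume)) := by
  haveI := vol_prob
  set L : C(AddCircle (1:ℝ), ℂ) → ℂ := fun f => ∫ x : AddCircle (1:ℝ), f x ∂volume with hL
  set A : ℕ → C(AddCircle (1:ℝ), ℂ) → ℂ :=
    fun n f => ∫ ω, f (((n:ℝ) * Y ω : ℝ) : AddCircle (1:ℝ)) ∂P with hA
  -- the property holds on the span of the fourier monomials
  have hspan : ∀ g ∈ Submodule.span ℂ (Set.range (@fourier 1)),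
      Tendsto (fun n : ℕ => A n g) atTop (nhds (L g)) := by
    intro g hg
    induction hg using Submodule.span_induction with
    | mem g hg =>
      obtain ⟨k, rfl⟩ := hg
      rcases eq_or_ne k 0 with rfl | hk
      · have h1 : ∀ n : ℕ, A n (fourier 0) = 1 := by
          intro n
          simp only [hA, fourier_zero]
          simp
        have h2 : L (fourier 0) = 1 := by
          simp only [hL, fourier_zero]
          simp
        simp only [h1, h2]
        exact tendsto_const_nhds
      · rw [hL]
        simp only
        rw [fourier_int k hk]
        have key : ∀ n : ℕ, A n (fourier k) =
            (fun u : ℝ => ∫ ω, Complex.exp (Complex.I * (u * Y ω)) ∂P) (2 * π * k * n) := by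
          intro n
          simp only [hA]
          congr 1
          funext ω
          rw [fourier_coe_apply]
          congr 1
          push_cast
          ring
        simp only [key]
        apply hRaj.comp
        rw [cocompact_eq_atBot_atTop]
        have hnat : Tendsto (fun n : ℕ => (n : ℝ)) atTop atTop := tendsto_natCast_atTop_atTop
        have harg : ∀ n : ℕ, 2 * π * (k:ℝ) * (n:ℝ) = (2 * π * (k:ℝ)) * (n:ℝ) := fun n => by ring
        rcases lt_or_gt_of_ne (fun h : (k:ℝ) = 0 => hk (by exact_mod_cast h)) with hneg | hpos
        · apply Filter.Tendsto.mono_right _ le_sup_left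
          have h2k : 2 * π * (k:ℝ) < 0 := by
            have := Real.pi_pos
            nlinarith
          exact hnat.const_mul_atTop_of_neg h2k
        · apply Filter.Tendsto.mono_right _ le_sup_right
          have h2k : 0 < 2 * π * (k:ℝ) := by
            have := Real.pi_pos
            nlinarith
          exact hnat.const_mul_atTop h2k
    | zero => simpa [hA, hL] using tendsto_const_nhds
    | add g₁ g₂ hg₁ hg₂ ih₁ ih₂ =>
      have ha : ∀ n, A n (g₁ + g₂) = A n g₁ + A n g₂ := by
        intro n
        simp only [hA, ContinuousMap.add_apply]
        exact integral_add (integrable_comp_circle P g₁ (meas_T Y hY n))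
          (integrable_comp_circle P g₂ (meas_T Y hY n))
      have hl : L (g₁ + g₂) = L g₁ + L g₂ := by
        simp only [hL, ContinuousMap.add_apply]
        exact integral_add (integrable_comp_circle volume g₁ measurable_id)
          (integrable_comp_circle volume g₂ measurable_id)
      rw [hl]
      simp only [ha]
      exact ih₁.add ih₂
    | smul c g hg ih =>
      have ha : ∀ n, A n (c • g) = c * A n g := by
        intro n
        simp only [hA, ContinuousMap.smul_apply, smul_eq_mul]
        exact integral_const_mul c _
      have hl : L (c • g) = c * L g := by
        simp only [hL, ContinuousMap.smul_apply, smul_eq_mul]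
        exact integral_const_mul c _
      rw [hl]
      simp only [ha]
      exact ih.const_mul c
  -- density + ε/3
  have hdense : f ∈ closure ((Submodule.span ℂ (Set.range (@fourier 1)) : Submodule ℂ _) : Set _) := by
    rw [← Submodule.topologicalClosure_coe, span_fourier_closure_eq_top]
    trivial
  rw [Metric.tendsto_atTop]
  intro ε hε
  obtain ⟨g, hgmem, hgclose⟩ := Metric.mem_closure_iff.mp hdense (ε/3) (by linarith)
  have hAg := hspan g hgmem
  rw [Metric.tendsto_atTop] at hAg
  obtain ⟨N, hN⟩ := hAg (ε/3) (by linarith)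
  refine ⟨N, fun n hn => ?_⟩
  have hbd : ∀ (μ : Measure (AddCircle (1:ℝ))) [IsProbabilityMeasure μ],
      ‖∫ x, f x ∂μ - ∫ x, g x ∂μ‖ ≤ dist f g := by
    intro μ _
    have hif : Integrable (fun x : AddCircle (1:ℝ) => f x) μ :=
      integrable_comp_circle μ f measurable_id
    have hig : Integrable (fun x : AddCircle (1:ℝ) => g x) μ :=
      integrable_comp_circle μ g measurable_id
    rw [← integral_sub hif hig]
    calc ‖∫ x, (f x - g x) ∂μ‖ ≤ dist f g * (μ Set.univ).toReal := by
          apply norm_integral_le_of_norm_le_const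
          exact Filter.Eventually.of_forall fun x => by
            simpa [dist_eq_norm] using ContinuousMap.norm_coe_le_norm (f - g) x
      _ = dist f g := by simp
  have h1 : dist (A n f) (A n g) ≤ dist f g := by
    rw [dist_eq_norm, hA]
    simp only
    rw [← integral_sub (integrable_comp_circle P f (meas_T Y hY n))
      (integrable_comp_circle P g (meas_T Y hY n))]
    calc ‖∫ ω, (f _ - g _) ∂P‖ ≤ dist f g * (P Set.univ).toReal := by
          apply norm_integral_le_of_norm_le_const
          exact Filter.Eventually.of_forall fun ω => by
            simpa [dist_eq_norm] using ContinuousMap.norm_coe_le_norm (f - g) _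
      _ = dist f g := by simp
  have h2 : dist (L g) (L f) ≤ dist f g := by
    rw [dist_eq_norm, hL]
    rw [norm_sub_rev]
    exact hbd volume
  calc dist (A n f) (L f) ≤ dist (A n f) (A n g) + dist (A n g) (L g) + dist (L g) (L f) :=
        dist_triangle4 _ _ _ _
    _ < ε/3 + ε/3 + ε/3 := by
        have := hN n hn
        have hx1 := lt_of_le_of_lt h1 hgclose
        have hx2 := lt_of_le_of_lt h2 hgclose
        linarith
    _ = ε := by ring
lemma circle_conv_real
    (hRaj : Tendsto (fun u : ℝ => ∫ ω, Complex.exp (Complex.I * (u * Y ω)) ∂P)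
      (cocompact ℝ) (nhds 0))
    (f : C(AddCircle (1:ℝ), ℝ)) :
    Tendsto (fun n : ℕ => ∫ ω, f (((n:ℝ) * Y ω : ℝ) : AddCircle (1:ℝ)) ∂P) atTop
      (nhds (∫ x : AddCircle (1:ℝ), f x ∂volume)) := by
  set fc : C(AddCircle (1:ℝ), ℂ) := ⟨fun x => ((f x : ℝ) : ℂ), Complex.continuous_ofReal.comp f.continuous⟩ with hfc
  have h := circle_conv_complex P Y hY hRaj fc
  have e1 : ∀ n : ℕ, (∫ ω, fc (((n:ℝ) * Y ω : ℝ) : AddCircle (1:ℝ)) ∂P)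
      = ((∫ ω, f (((n:ℝ) * Y ω : ℝ) : AddCircle (1:ℝ)) ∂P : ℝ) : ℂ) := by
    intro n
    simp only [hfc, ContinuousMap.coe_mk]
    exact integral_ofReal
  have e2 : (∫ x : AddCircle (1:ℝ), fc x ∂volume)
      = ((∫ x : AddCircle (1:ℝ), f x ∂volume : ℝ) : ℂ) := by
    simp only [hfc, ContinuousMap.coe_mk]
    exact integral_ofReal
  rw [funext e1, e2] at h
  have := (Complex.continuous_re.tendsto _).comp h
  simpa [Function.comp_def] using this

set_option maxHeartbeats 1000000 in
lemma fract_conv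
    (hRaj : Tendsto (fun u : ℝ => ∫ ω, Complex.exp (Complex.I * (u * Y ω)) ∂P)
      (cocompact ℝ) (nhds 0))
    (F : BoundedContinuousFunction ℝ ℝ) :
    Tendsto (fun n : ℕ => ∫ ω, F (-Int.fract ((n:ℝ) * Y ω)) ∂P) atTop
      (nhds (∫ u in Set.Icc (0:ℝ) 1, F (-u))) := by
  haveI := vol_prob
  rw [Metric.tendsto_atTop]
  intro ε hε
  set M := ‖F‖ with hM
  have hM0 : 0 ≤ M := norm_nonneg F
  have hFb : ∀ x, |F x| ≤ M := fun x => F.norm_coe_le_norm x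
  set δ : ℝ := min (1/8) (ε / (12*M + 2)) with hδ
  have hδ0 : 0 < δ := lt_min (by norm_num) (div_pos hε (by linarith))
  have hδ8 : δ ≤ 1/8 := min_le_left _ _
  have hδε : (12*M+1) * δ < ε := by
    have h1 : δ ≤ ε / (12*M + 2) := min_le_right _ _
    have h2 : (12*M+1) * δ ≤ (12*M+1) * (ε / (12*M+2)) := by
      apply mul_le_mul_of_nonneg_left h1 (by linarith)
    have h3 : (12*M+1) * (ε / (12*M+2)) < ε := by
      have h4 : ε / (12*M+2) * (12*M+2) = ε := div_mul_cancel₀ ε (by linarith)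
      nlinarith [div_pos hε (by linarith : (0:ℝ) < 12*M+2)]
    linarith
  -- the ramp and the cutoff functions
  set r : ℝ → ℝ := fun x => min 1 (max 0 ((1-x)/δ)) with hr
  have hr0 : ∀ x, 0 ≤ r x := fun x => le_min (by norm_num) (le_max_left _ _)
  have hr1 : ∀ x, r x ≤ 1 := fun x => min_le_left _ _
  have hrcont : Continuous r :=
    continuous_const.min ((continuous_const.max ((continuous_const.sub continuous_id).div_const δ)))
  have hreq1 : ∀ x ≤ 1 - δ, r x = 1 := by
    intro x hx
    have : (1:ℝ) ≤ (1-x)/δ := (le_div_iff₀ hδ0).mpr (by linarith)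
    simp only [hr]
    rw [max_eq_right (by linarith : (0:ℝ) ≤ (1-x)/δ), min_eq_left this]
  have hreq0 : r 1 = 0 := by
    simp only [hr]
    norm_num
  set g0 : ℝ → ℝ := fun x => r x * F (-x) + (1 - r x) * F 0 with hg0
  have hg0cont : Continuous g0 :=
    (hrcont.mul (F.continuous.comp continuous_neg)).add
      ((continuous_const.sub hrcont).mul continuous_const)
  have hg0eq : ∀ x ≤ 1 - δ, g0 x = F (-x) := by
    intro x hx
    simp only [hg0, hreq1 x hx]
    ring
  have hg0ends : g0 0 = g0 1 := by
    have h0 : r 0 = 1 := hreq1 0 (by linarith)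
    simp only [hg0, h0, hreq0]
    norm_num
  have hdiff : ∀ x, |F (-x) - g0 x| ≤ 2*M*(1 - r x) := by
    intro x
    have : F (-x) - g0 x = (1 - r x) * (F (-x) - F 0) := by simp only [hg0]; ring
    rw [this, abs_mul, abs_of_nonneg (by linarith [hr1 x] : (0:ℝ) ≤ 1 - r x)]
    have : |F (-x) - F 0| ≤ 2*M := by
      have := hFb (-x); have := hFb 0
      calc |F (-x) - F 0| ≤ |F (-x)| + |F 0| := abs_sub _ _
        _ ≤ 2*M := by linarith
    nlinarith [hr1 x, hr0 x]
  have hg0bd : ∀ x, |g0 x| ≤ M := by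
    intro x
    have h1 := hFb (-x); have h2 := hFb 0
    have h3 := hr0 x; have h4 := hr1 x
    simp only [hg0]
    rw [abs_le] at *
    constructor <;> nlinarith
  set g : C(AddCircle (1:ℝ), ℝ) :=
    ⟨AddCircle.liftIco 1 0 g0, AddCircle.liftIco_zero_continuous
      (by simpa using hg0ends) hg0cont.continuousOn⟩ with hgdef
  have hgval : ∀ z : ℝ, z ∈ Set.Ico (0:ℝ) 1 → g ((z : ℝ) : AddCircle (1:ℝ)) = g0 z := by
    intro z hz
    show AddCircle.liftIco 1 0 g0 _ = _
    exact AddCircle.liftIco_zero_coe_apply hz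
  set h0 : ℝ → ℝ := fun x => min 1 (max 0 (2 - |x|/δ)) with hh0
  have hh0cont : Continuous h0 :=
    continuous_const.min (continuous_const.max
      (continuous_const.sub (continuous_abs.div_const δ)))
  have hh00 : ∀ x, 0 ≤ h0 x := fun x => le_min (by norm_num) (le_max_left _ _)
  have hh01 : ∀ x, h0 x ≤ 1 := fun x => min_le_left _ _
  have hh0ends : h0 (-(1/2)) = h0 (-(1/2)+1) := by
    simp only [hh0]
    norm_num
  set h : C(AddCircle (1:ℝ), ℝ) :=
    ⟨AddCircle.liftIco 1 (-(1/2)) h0, AddCircle.liftIco_continuous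
      (by simpa using hh0ends) hh0cont.continuousOn⟩ with hhdef
  have hhval : ∀ z : ℝ, z ∈ Set.Ico (-(1/2):ℝ) (1/2) → h ((z : ℝ) : AddCircle (1:ℝ)) = h0 z := by
    intro z hz
    show AddCircle.liftIco 1 (-(1/2)) h0 _ = _
    exact AddCircle.liftIco_coe_apply ⟨hz.1, by linarith [hz.2]⟩
  have hcoe_shift : ∀ z : ℝ, ((z : ℝ) : AddCircle (1:ℝ)) = (((z - 1 : ℝ)) : AddCircle (1:ℝ)) := by
    intro z
    rw [QuotientAddGroup.eq]
    refine AddSubgroup.mem_zmultiples_iff.mpr ⟨-1, ?_⟩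
    simp
    ring
  -- value of h at points of [0,1)
  have hhnn : ∀ z : ℝ, z ∈ Set.Ico (0:ℝ) 1 → 0 ≤ h ((z:ℝ) : AddCircle (1:ℝ)) := by
    intro z hz
    rcases lt_or_ge z (1/2) with hlt | hge
    · rw [hhval z ⟨by linarith [hz.1], hlt⟩]
      exact hh00 z
    · rw [hcoe_shift z, hhval (z-1) ⟨by linarith, by linarith [hz.2]⟩]
      exact hh00 _
  have hhone : ∀ z : ℝ, 1 - δ < z → z < 1 → h ((z:ℝ) : AddCircle (1:ℝ)) = 1 := by
    intro z h1 h2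
    rw [hcoe_shift z, hhval (z-1) ⟨by linarith, by linarith⟩]
    simp only [hh0]
    have habs : |z - 1| = 1 - z := by
      rw [abs_of_nonpos (by linarith)]
      ring
    rw [habs]
    have : (1 - z)/δ < 1 := (div_lt_one hδ0).mpr (by linarith)
    rw [max_eq_right (by linarith), min_eq_left (by linarith)]
  -- the key pointwise estimate
  have key : ∀ x : ℝ, |F (-Int.fract x) - g ((x:ℝ) : AddCircle (1:ℝ))|
      ≤ 2*M * h ((x:ℝ) : AddCircle (1:ℝ)) := by
    intro x
    set z := Int.fract x with hz
    have hz0 : 0 ≤ z := Int.fract_nonneg x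
    have hz1 : z < 1 := Int.fract_lt_one x
    have hxz : ((x:ℝ) : AddCircle (1:ℝ)) = ((z:ℝ) : AddCircle (1:ℝ)) := (fract_coe x).symm
    rw [hxz, hgval z ⟨hz0, hz1⟩]
    rcases le_or_gt z (1-δ) with hle | hgt
    · rw [hg0eq z hle, sub_self, abs_zero]
      exact mul_nonneg (by linarith) (hhnn z ⟨hz0, hz1⟩)
    · rw [hhone z hgt hz1, mul_one]
      calc |F (-z) - g0 z| ≤ 2*M*(1 - r z) := hdiff z
        _ ≤ 2*M := by nlinarith [hr0 z]
  -- integrability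
  have measT : ∀ n : ℕ, Measurable (fun ω => (((n:ℝ) * Y ω : ℝ) : AddCircle (1:ℝ))) :=
    fun n => meas_T Y hY n
  have iF : ∀ n : ℕ, Integrable (fun ω => F (-Int.fract ((n:ℝ) * Y ω))) P := by
    intro n
    refine ⟨(F.continuous.measurable.comp
      ((measurable_fract.comp (hY.const_mul (n:ℝ))).neg)).aestronglyMeasurable, ?_⟩
    apply HasFiniteIntegral.of_bounded (C := M)
    exact Filter.Eventually.of_forall fun ω => by
      simpa [Real.norm_eq_abs] using hFb (-Int.fract ((n:ℝ) * Y ω))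
  have ig : ∀ n : ℕ, Integrable (fun ω => g (((n:ℝ) * Y ω : ℝ) : AddCircle (1:ℝ))) P :=
    fun n => integrable_comp_circle P g (measT n)
  have ihh : ∀ n : ℕ, Integrable (fun ω => h (((n:ℝ) * Y ω : ℝ) : AddCircle (1:ℝ))) P :=
    fun n => integrable_comp_circle P h (measT n)
  -- estimate 1 : distance between the two P-integrals
  have est1 : ∀ n : ℕ, |(∫ ω, F (-Int.fract ((n:ℝ) * Y ω)) ∂P)
      - ∫ ω, g (((n:ℝ) * Y ω : ℝ) : AddCircle (1:ℝ)) ∂P|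
      ≤ 2*M * ∫ ω, h (((n:ℝ) * Y ω : ℝ) : AddCircle (1:ℝ)) ∂P := by
    intro n
    rw [← integral_sub (iF n) (ig n)]
    calc |∫ ω, (F (-Int.fract ((n:ℝ) * Y ω))
          - g (((n:ℝ) * Y ω : ℝ) : AddCircle (1:ℝ))) ∂P|
        ≤ ∫ ω, |F (-Int.fract ((n:ℝ) * Y ω))
          - g (((n:ℝ) * Y ω : ℝ) : AddCircle (1:ℝ))| ∂P := by
          simpa [Real.norm_eq_abs] using norm_integral_le_integral_norm
            (μ := P) (fun ω => F (-Int.fract ((n:ℝ) * Y ω))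
              - g (((n:ℝ) * Y ω : ℝ) : AddCircle (1:ℝ)))
      _ ≤ ∫ ω, 2*M * h (((n:ℝ) * Y ω : ℝ) : AddCircle (1:ℝ)) ∂P := by
          apply integral_mono ((iF n).sub (ig n)).abs ((ihh n).const_mul (2*M))
          intro ω
          exact key ((n:ℝ) * Y ω)
      _ = 2*M * ∫ ω, h (((n:ℝ) * Y ω : ℝ) : AddCircle (1:ℝ)) ∂P := integral_const_mul _ _
  -- estimate 2 : the circle integral of h is small
  have est2 : (∫ x : AddCircle (1:ℝ), h x ∂volume) ≤ 4*δ := by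
    rw [← AddCircle.integral_preimage (1:ℝ) (-(1/2)) (fun x => h x),
      integral_Ioc_eq_integral_Ioo]
    have hcongr : (∫ x in Set.Ioo (-(1/2):ℝ) (-(1/2)+1), h ((x:ℝ) : AddCircle (1:ℝ)))
        = ∫ x in Set.Ioo (-(1/2):ℝ) (-(1/2)+1), h0 x :=
      setIntegral_congr_fun measurableSet_Ioo
        (fun x hx => hhval x ⟨le_of_lt hx.1, by linarith [hx.2]⟩)
    rw [hcongr]
    set ind : ℝ → ℝ := Set.indicator (Set.Icc (-(2*δ)) (2*δ)) (fun _ => 1) with hind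
    have hind_int : Integrable ind volume := by
      rw [hind, integrable_indicator_iff measurableSet_Icc]
      exact integrableOn_const measure_Icc_lt_top.ne
    have hle : ∀ x, h0 x ≤ ind x := by
      intro x
      by_cases hx : |x| ≤ 2*δ
      · have hmem : x ∈ Set.Icc (-(2*δ)) (2*δ) := by
          rw [Set.mem_Icc]
          constructor <;> [linarith [neg_abs_le x, hx]; linarith [le_abs_self x, hx]]
        rw [hind, Set.indicator_of_mem hmem]
        exact hh01 x
      · have hx' : 2*δ < |x| := not_le.mp hx
        have hv : h0 x = 0 := by
          simp only [hh0]
          have : 2 - |x|/δ ≤ 0 := by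
            rw [sub_nonpos, le_div_iff₀ hδ0]
            linarith
          rw [max_eq_left this]
          norm_num
        have hi : ind x = 0 := by
          rw [hind]
          apply Set.indicator_of_notMem
          rw [Set.mem_Icc]
          intro ⟨ha, hb⟩
          rcases abs_cases x with ⟨he, _⟩ | ⟨he, _⟩ <;> linarith
        rw [hv, hi]
    have hIoo_int : IntegrableOn h0 (Set.Ioo (-(1/2):ℝ) (-(1/2)+1)) volume :=
      (hh0cont.integrableOn_Icc).mono_set Set.Ioo_subset_Icc_self
    calc (∫ x in Set.Ioo (-(1/2):ℝ) (-(1/2)+1), h0 x)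
        ≤ ∫ x in Set.Ioo (-(1/2):ℝ) (-(1/2)+1), ind x :=
          setIntegral_mono_on hIoo_int hind_int.integrableOn measurableSet_Ioo
            (fun x _ => hle x)
      _ ≤ ∫ x, ind x := setIntegral_le_integral hind_int
          (Filter.Eventually.of_forall fun x =>
            Set.indicator_nonneg (fun _ _ => by norm_num) x)
      _ = 4*δ := by
          rw [hind, integral_indicator_const _ measurableSet_Icc]
          rw [Real.volume_real_Icc, smul_eq_mul, mul_one, max_eq_left (by linarith)]
          ring
  -- estimate 3 : circle integral of g is close to the target
  have est3 : |(∫ x : AddCircle (1:ℝ), g x ∂volume) - ∫ u in Set.Icc (0:ℝ) 1, F (-u)|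
      ≤ 2*M*δ := by
    have hgv : (∫ x : AddCircle (1:ℝ), g x ∂volume) = ∫ x in Set.Ioo (0:ℝ) 1, g0 x := by
      rw [← AddCircle.integral_preimage (1:ℝ) 0 (fun x => g x), zero_add,
        integral_Ioc_eq_integral_Ioo]
      exact setIntegral_congr_fun measurableSet_Ioo
        (fun x hx => hgval x ⟨le_of_lt hx.1, hx.2⟩)
    have htv : (∫ u in Set.Icc (0:ℝ) 1, F (-u)) = ∫ u in Set.Ioo (0:ℝ) 1, F (-u) := by
      rw [integral_Icc_eq_integral_Ioc, integral_Ioc_eq_integral_Ioo]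
    have hg0_int : IntegrableOn g0 (Set.Ioo (0:ℝ) 1) volume :=
      (hg0cont.integrableOn_Icc).mono_set Set.Ioo_subset_Icc_self
    have hF_int : IntegrableOn (fun u : ℝ => F (-u)) (Set.Ioo (0:ℝ) 1) volume :=
      ((F.continuous.comp continuous_neg).integrableOn_Icc).mono_set Set.Ioo_subset_Icc_self
    set ind2 : ℝ → ℝ := Set.indicator (Set.Icc (1-δ) 1) (fun _ => 2*M) with hind2
    have hind2_int : Integrable ind2 volume := by
      rw [hind2, integrable_indicator_iff measurableSet_Icc]
      exact integrableOn_const measure_Icc_lt_top.ne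
    have hle2 : ∀ x ∈ Set.Ioo (0:ℝ) 1, |g0 x - F (-x)| ≤ ind2 x := by
      intro x hx
      rcases le_or_gt x (1-δ) with hxle | hxgt
      · rw [hg0eq x hxle, sub_self, abs_zero, hind2]
        exact Set.indicator_nonneg (fun _ _ => by linarith) x
      · have hmem : x ∈ Set.Icc (1-δ) 1 := ⟨le_of_lt hxgt, le_of_lt hx.2⟩
        rw [hind2, Set.indicator_of_mem hmem, abs_sub_comm]
        calc |F (-x) - g0 x| ≤ 2*M*(1 - r x) := hdiff x
          _ ≤ 2*M := by nlinarith [hr0 x]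
    rw [hgv, htv, ← integral_sub hg0_int hF_int]
    calc |∫ x in Set.Ioo (0:ℝ) 1, (g0 x - F (-x))|
        ≤ ∫ x in Set.Ioo (0:ℝ) 1, |g0 x - F (-x)| := by
          simpa [Real.norm_eq_abs] using norm_integral_le_integral_norm
            (μ := volume.restrict (Set.Ioo (0:ℝ) 1)) (fun x => g0 x - F (-x))
      _ ≤ ∫ x in Set.Ioo (0:ℝ) 1, ind2 x :=
          setIntegral_mono_on (hg0_int.sub hF_int).abs hind2_int.integrableOn
            measurableSet_Ioo hle2
      _ ≤ ∫ x, ind2 x := setIntegral_le_integral hind2_int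
          (Filter.Eventually.of_forall fun x =>
            Set.indicator_nonneg (fun _ _ => by linarith) x)
      _ = 2*M*δ := by
          rw [hind2, integral_indicator_const _ measurableSet_Icc]
          rw [Real.volume_real_Icc, smul_eq_mul, max_eq_left (by linarith)]
          ring
  -- convergence of the two circle integrals
  have hg_t := circle_conv_real P Y hY hRaj g
  have hh_t := circle_conv_real P Y hY hRaj h
  rw [Metric.tendsto_atTop] at hg_t hh_t
  obtain ⟨N1, hN1⟩ := hg_t δ hδ0
  obtain ⟨N2, hN2⟩ := hh_t δ hδ0
  refine ⟨max N1 N2, fun n hn => ?_⟩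
  have h1 := hN1 n (le_trans (le_max_left _ _) hn)
  have h2 := hN2 n (le_trans (le_max_right _ _) hn)
  rw [Real.dist_eq] at h1 h2 ⊢
  have h2' : (∫ ω, h (((n:ℝ) * Y ω : ℝ) : AddCircle (1:ℝ)) ∂P) ≤ 5*δ := by
    have := abs_lt.mp h2
    linarith [this.1, this.2]
  have hterm1 : |(∫ ω, F (-Int.fract ((n:ℝ) * Y ω)) ∂P)
      - ∫ ω, g (((n:ℝ) * Y ω : ℝ) : AddCircle (1:ℝ)) ∂P| ≤ 10*M*δ := by
    have := est1 n
    have hm : 2*M * (∫ ω, h (((n:ℝ) * Y ω : ℝ) : AddCircle (1:ℝ)) ∂P) ≤ 2*M*(5*δ) :=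
      mul_le_mul_of_nonneg_left h2' (by linarith)
    nlinarith
  have htri : |(∫ ω, F (-Int.fract ((n:ℝ) * Y ω)) ∂P) - ∫ u in Set.Icc (0:ℝ) 1, F (-u)|
      ≤ |(∫ ω, F (-Int.fract ((n:ℝ) * Y ω)) ∂P)
          - ∫ ω, g (((n:ℝ) * Y ω : ℝ) : AddCircle (1:ℝ)) ∂P|
        + |(∫ ω, g (((n:ℝ) * Y ω : ℝ) : AddCircle (1:ℝ)) ∂P)
          - ∫ x : AddCircle (1:ℝ), g x ∂volume|
        + |(∫ x : AddCircle (1:ℝ), g x ∂volume) - ∫ u in Set.Icc (0:ℝ) 1, F (-u)| := by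
    have := abs_sub_le (∫ ω, F (-Int.fract ((n:ℝ) * Y ω)) ∂P)
      (∫ ω, g (((n:ℝ) * Y ω : ℝ) : AddCircle (1:ℝ)) ∂P)
      (∫ u in Set.Icc (0:ℝ) 1, F (-u))
    have := abs_sub_le (∫ ω, g (((n:ℝ) * Y ω : ℝ) : AddCircle (1:ℝ)) ∂P)
      (∫ x : AddCircle (1:ℝ), g x ∂volume)
      (∫ u in Set.Icc (0:ℝ) 1, F (-u))
    linarith
  have hest3 := est3
  linarith [htri, hterm1, h1, hest3, hδε]




end

end




open MeasureTheory Filter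

set_option maxHeartbeats 1000000 in
/-- If `Y` is bounded with Rajchman law and `Y_n^{(d)} = ⌊nY⌋/n` is its
approximation by default, then `n(Y_n^{(d)} − Y)` converges in law to `−U`, `U`
uniform on `[0,1]`, and `E[n(Y_n^{(d)} − Y)] → −1/2`. -/
theorem stmt9 {Ω : Type*} [MeasurableSpace Ω] (P : Measure Ω) [IsProbabilityMeasure P]
    (Y : Ω → ℝ) (hY : Measurable Y) (C : ℝ) (hbdd : ∀ ω, |Y ω| ≤ C)
    (hRaj : Tendsto (fun u : ℝ => ∫ ω, Complex.exp (Complex.I * (u * Y ω)) ∂P)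
      (cocompact ℝ) (nhds 0))
    (Yn : ℕ → Ω → ℝ) (hYn : ∀ n ω, Yn n ω = (⌊(n:ℝ) * Y ω⌋ : ℝ) / n) :
    (∀ F : BoundedContinuousFunction ℝ ℝ,
        Tendsto (fun n : ℕ => ∫ ω, F ((n:ℝ) * (Yn n ω - Y ω)) ∂P)
          atTop (nhds (∫ u in Set.Icc (0:ℝ) 1, F (-u)))) ∧
      Tendsto (fun n : ℕ => ∫ ω, (n:ℝ) * (Yn n ω - Y ω) ∂P)
        atTop (nhds (-(1/2))) := by
  have hrw : ∀ (n : ℕ) (ω : Ω), (n:ℝ) * (Yn n ω - Y ω) = -Int.fract ((n:ℝ) * Y ω) := by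
    intro n ω
    rw [hYn]
    rcases Nat.eq_zero_or_pos n with rfl | hn
    · simp only [Nat.cast_zero, zero_mul, Int.fract_zero, neg_zero, Int.floor_zero,
        Int.cast_zero, zero_div, sub_zero]
    · have hne : (n:ℝ) ≠ 0 := Nat.cast_ne_zero.mpr hn.ne'
      field_simp
      rw [← Int.self_sub_floor]
      ring
  set Fc : BoundedContinuousFunction ℝ ℝ :=
    BoundedContinuousFunction.ofNormedAddCommGroup (fun x => max (-1) (min 1 x))
      (continuous_const.max (continuous_const.min continuous_id)) 1
      (by
        intro x
        rw [Real.norm_eq_abs, abs_le]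
        constructor
        · exact le_max_left _ _
        · exact max_le (by norm_num) (le_trans (min_le_left _ _) (by norm_num))) with hFc
  have hclamp : ∀ x : ℝ, -1 ≤ x → x ≤ 1 → Fc x = x := by
    intro x h1 h2
    simp only [hFc, BoundedContinuousFunction.coe_ofNormedAddCommGroup]
    rw [min_eq_right h2, max_eq_right h1]
  refine ⟨fun F => ?_, ?_⟩
  · have h := fract_conv P Y hY hRaj F
    simpa only [hrw] using h
  · have h2 := fract_conv P Y hY hRaj Fc
    have htarget : (∫ u in Set.Icc (0:ℝ) 1, Fc (-u)) = -(1/2) := by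
      have heq : Set.EqOn (fun u : ℝ => Fc (-u)) (fun u : ℝ => -u) (Set.Icc (0:ℝ) 1) := by
        intro u hu
        exact hclamp (-u) (by linarith [hu.2]) (by linarith [hu.1])
      rw [setIntegral_congr_fun measurableSet_Icc heq]
      rw [MeasureTheory.integral_Icc_eq_integral_Ioc,
        ← intervalIntegral.integral_of_le (by norm_num : (0:ℝ) ≤ 1)]
      rw [intervalIntegral.integral_neg, integral_id]
      norm_num
    rw [htarget] at h2
    have hfun : (fun n : ℕ => ∫ ω, Fc (-Int.fract ((n:ℝ) * Y ω)) ∂P)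
        = fun n : ℕ => ∫ ω, (n:ℝ) * (Yn n ω - Y ω) ∂P := by
      funext n
      congr 1
      funext ω
      rw [hrw]
      exact hclamp _ (by linarith [Int.fract_lt_one ((n:ℝ) * Y ω)])
        (by linarith [Int.fract_nonneg ((n:ℝ) * Y ω)])
    rw [hfun] at h2
    exact h2
end

section
/- Let R_n be the isometry of L²_ℂ of the Wiener space acting on the k-th Wiener chaos by multiplying the kernel integrand by Π_{p=1}^k e^{(i/n)θ(ns_p)}, where θ is a bounded 1-periodic function with ∫₀¹θ = 0 and ∫₀¹θ² = 1. Then for X in the k-th Wiener chaos, ‖n(R_n(X) − X)‖²_{L²} ≤ k² ‖X‖²_{L²} ‖θ‖²_∞, and consequently for X in the domain of the Ornstein–Uhlenbeck operator A, ‖n(R_n(X) − X)‖_{L²} ≤ 2 ‖AX‖_{L²} ‖θ‖_∞. -/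
open MeasureTheory Filter

/-- The increasing simplex `{0 ≤ s₁ < ⋯ < s_k ≤ 1}` parametrising the `k`-th
Wiener chaos: `X = ∫_{s₁<⋯<s_k} f̂ dB_{s₁}⋯dB_{s_k}` with
`‖X‖²_{L²} = ∫_Δ |f̂|²`. -/
def chaosSimplex (k : ℕ) : Set (Fin k → ℝ) :=
  {s | (∀ i, s i ∈ Set.Icc (0:ℝ) 1) ∧ ∀ i j : Fin k, i < j → s i < s j}

lemma norm_exp_real_mul_I_sub_one_le (t : ℝ) :
    ‖Complex.exp ((t:ℂ) * Complex.I) - 1‖ ≤ |t| := by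
  have hre : (Complex.exp ((t:ℂ) * Complex.I) - 1).re = Real.cos t - 1 := by
    simp [Complex.exp_ofReal_mul_I_re]
  have him : (Complex.exp ((t:ℂ) * Complex.I) - 1).im = Real.sin t := by
    simp [Complex.exp_ofReal_mul_I_im]
  have hsq : ‖Complex.exp ((t:ℂ) * Complex.I) - 1‖ ^ 2 = 2 - 2 * Real.cos t := by
    rw [Complex.sq_norm, Complex.normSq_apply, hre, him]
    nlinarith [Real.sin_sq_add_cos_sq t]
  have h1 : Real.cos t = 1 - 2 * Real.sin (t / 2) ^ 2 := by
    have h := Real.cos_two_mul (t / 2)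
    have h2 := Real.sin_sq_add_cos_sq (t / 2)
    rw [show 2 * (t / 2) = t by ring] at h
    nlinarith
  have h3 : Real.sin (t / 2) ^ 2 ≤ (t / 2) ^ 2 := Real.sin_sq_le_sq
  have hle : ‖Complex.exp ((t:ℂ) * Complex.I) - 1‖ ^ 2 ≤ |t| ^ 2 := by
    rw [hsq, sq_abs]; nlinarith
  exact (abs_le_of_sq_le_sq' hle (abs_nonneg t)).2

/-- for the isometry `R_n` multiplying the `k`-th chaos kernel by
`Π_p e^{(i/n)θ(ns_p)}`, one has `‖n(R_n X − X)‖² ≤ k²‖X‖²‖θ‖²_∞` on the `k`-th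
chaos (expressed through the kernels, `‖n(R_nX−X)‖² = n²∫_Δ |f̂|²|e^{(i/n)Σθ(ns_p)}−1|²`),
and consequently `‖n(R_n X − X)‖ ≤ 2‖AX‖‖θ‖_∞` for `X` in the domain of the
Ornstein–Uhlenbeck operator `A` (which multiplies the `k`-th chaos by `−k/2`),
expressed through the full chaos decomposition `g`. -/
theorem stmt15 (θ : ℝ → ℝ) (hθm : Measurable θ) (C : ℝ) (hθb : ∀ x, |θ x| ≤ C)
    (hper : Function.Periodic θ 1)
    (h0 : ∫ x in (0:ℝ)..1, θ x = 0) (h2 : ∫ x in (0:ℝ)..1, (θ x) ^ 2 = 1)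
    (n : ℕ) (hn : 1 ≤ n) :
    (∀ (k : ℕ) (f : (Fin k → ℝ) → ℂ), MemLp f 2 (volume.restrict (chaosSimplex k)) →
      (n:ℝ) ^ 2 * ∫ s in chaosSimplex k,
          ‖f s‖ ^ 2 * ‖Complex.exp ((Complex.I / n) * ∑ p, (θ ((n:ℝ) * s p) : ℂ)) - 1‖ ^ 2
        ≤ (k:ℝ) ^ 2 * C ^ 2 * ∫ s in chaosSimplex k, ‖f s‖ ^ 2) ∧
    (∀ g : (k : ℕ) → (Fin k → ℝ) → ℂ,
      (∀ k, MemLp (g k) 2 (volume.restrict (chaosSimplex k))) →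
      -- `X ∈ 𝒟(A)`: `‖AX‖² = Σ_k (k/2)² ‖X_k‖² < ∞`
      Summable (fun k : ℕ => ((k:ℝ) / 2) ^ 2 * ∫ s in chaosSimplex k, ‖g k s‖ ^ 2) →
      ∑' k : ℕ, (n:ℝ) ^ 2 * ∫ s in chaosSimplex k,
          ‖g k s‖ ^ 2 * ‖Complex.exp ((Complex.I / n) * ∑ p, (θ ((n:ℝ) * s p) : ℂ)) - 1‖ ^ 2
        ≤ (2 * C) ^ 2 *
          ∑' k : ℕ, ((k:ℝ) / 2) ^ 2 * ∫ s in chaosSimplex k, ‖g k s‖ ^ 2) := by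
  have hC : 0 ≤ C := le_trans (abs_nonneg (θ 0)) (hθb 0)
  have hn0 : (0:ℝ) < n := by exact_mod_cast hn
  -- the first (key) inequality
  have key : ∀ (k : ℕ) (f : (Fin k → ℝ) → ℂ),
      MemLp f 2 (volume.restrict (chaosSimplex k)) →
      (n:ℝ) ^ 2 * ∫ s in chaosSimplex k,
          ‖f s‖ ^ 2 * ‖Complex.exp ((Complex.I / n) * ∑ p, (θ ((n:ℝ) * s p) : ℂ)) - 1‖ ^ 2
        ≤ (k:ℝ) ^ 2 * C ^ 2 * ∫ s in chaosSimplex k, ‖f s‖ ^ 2 := by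
    intro k f hf
    -- pointwise bound
    have hpt : ∀ s : Fin k → ℝ,
        ‖f s‖ ^ 2 * ‖Complex.exp ((Complex.I / n) * ∑ p, (θ ((n:ℝ) * s p) : ℂ)) - 1‖ ^ 2
          ≤ ‖f s‖ ^ 2 * ((k:ℝ) * C / n) ^ 2 := by
      intro s
      set t : ℝ := (∑ p, θ ((n:ℝ) * s p)) / n with ht
      have harg : (Complex.I / n) * ∑ p, (θ ((n:ℝ) * s p) : ℂ) = (t:ℂ) * Complex.I := by
        have hne : ((n:ℝ):ℂ) ≠ 0 := by exact_mod_cast hn0.ne'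
        rw [ht]
        push_cast
        field_simp
      have h1 : ‖Complex.exp ((Complex.I / n) * ∑ p, (θ ((n:ℝ) * s p) : ℂ)) - 1‖ ≤ |t| := by
        rw [harg]; exact norm_exp_real_mul_I_sub_one_le t
      have h2 : |t| ≤ (k:ℝ) * C / n := by
        rw [ht, abs_div, abs_of_pos hn0]
        apply div_le_div_of_nonneg_right ?_ hn0.le
        calc |∑ p, θ ((n:ℝ) * s p)| ≤ ∑ p, |θ ((n:ℝ) * s p)| :=
              Finset.abs_sum_le_sum_abs _ _
          _ ≤ ∑ _p : Fin k, C := Finset.sum_le_sum fun p _ => hθb _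
          _ = (k:ℝ) * C := by simp [mul_comm]
      have h3 : ‖Complex.exp ((Complex.I / n) * ∑ p, (θ ((n:ℝ) * s p) : ℂ)) - 1‖ ^ 2
          ≤ ((k:ℝ) * C / n) ^ 2 := by
        apply sq_le_sq' _ (h1.trans h2)
        exact le_trans (neg_nonpos_of_nonneg (by positivity)) (norm_nonneg _)
      exact mul_le_mul_of_nonneg_left h3 (by positivity)
    -- integrability of ‖f‖²
    have hint : Integrable (fun s => ‖f s‖ ^ 2) (volume.restrict (chaosSimplex k)) := by
      have := hf.integrable_norm_rpow two_ne_zero ENNReal.ofNat_ne_top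
      simpa [ENNReal.toReal_ofNat, Real.rpow_natCast] using this
    have hmono : (∫ s in chaosSimplex k,
          ‖f s‖ ^ 2 * ‖Complex.exp ((Complex.I / n) * ∑ p, (θ ((n:ℝ) * s p) : ℂ)) - 1‖ ^ 2)
        ≤ ∫ s in chaosSimplex k, ‖f s‖ ^ 2 * ((k:ℝ) * C / n) ^ 2 := by
      apply integral_mono_of_nonneg
      · exact Eventually.of_forall fun s => by positivity
      · exact hint.mul_const _
      · exact Eventually.of_forall hpt
    have heq : (∫ s in chaosSimplex k, ‖f s‖ ^ 2 * ((k:ℝ) * C / n) ^ 2)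
        = ((k:ℝ) * C / n) ^ 2 * ∫ s in chaosSimplex k, ‖f s‖ ^ 2 := by
      rw [integral_mul_const]; ring
    have : (n:ℝ) ^ 2 * ∫ s in chaosSimplex k,
          ‖f s‖ ^ 2 * ‖Complex.exp ((Complex.I / n) * ∑ p, (θ ((n:ℝ) * s p) : ℂ)) - 1‖ ^ 2
        ≤ (n:ℝ) ^ 2 * (((k:ℝ) * C / n) ^ 2 * ∫ s in chaosSimplex k, ‖f s‖ ^ 2) := by
      rw [← heq]
      exact mul_le_mul_of_nonneg_left hmono (by positivity)
    refine this.trans_eq ?_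
    have hne : (n:ℝ) ^ 2 ≠ 0 := by positivity
    calc (n:ℝ) ^ 2 * (((k:ℝ) * C / n) ^ 2 * ∫ s in chaosSimplex k, ‖f s‖ ^ 2)
        = ((k:ℝ) ^ 2 * C ^ 2) * ((n:ℝ) ^ 2 / (n:ℝ) ^ 2) *
            ∫ s in chaosSimplex k, ‖f s‖ ^ 2 := by ring
      _ = (k:ℝ) ^ 2 * C ^ 2 * ∫ s in chaosSimplex k, ‖f s‖ ^ 2 := by
            rw [div_self hne, mul_one]
  refine ⟨key, ?_⟩
  intro g hg hsum
  set a : ℕ → ℝ := fun k => ((k:ℝ) / 2) ^ 2 * ∫ s in chaosSimplex k, ‖g k s‖ ^ 2 with ha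
  set b : ℕ → ℝ := fun k => (n:ℝ) ^ 2 * ∫ s in chaosSimplex k,
      ‖g k s‖ ^ 2 * ‖Complex.exp ((Complex.I / n) * ∑ p, (θ ((n:ℝ) * s p) : ℂ)) - 1‖ ^ 2
    with hb
  have hbk : ∀ k, b k ≤ (2 * C) ^ 2 * a k := by
    intro k
    have := key k (g k) (hg k)
    refine this.trans_eq ?_
    rw [ha]
    ring
  have hb0 : ∀ k, 0 ≤ b k := by
    intro k
    apply mul_nonneg (by positivity)
    exact integral_nonneg fun s => by positivity
  have hsum2 : Summable (fun k => (2 * C) ^ 2 * a k) := hsum.mul_left _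
  have hsb : Summable b := Summable.of_nonneg_of_le hb0 hbk hsum2
  calc ∑' k, b k ≤ ∑' k, (2 * C) ^ 2 * a k := Summable.tsum_le_tsum hbk hsb hsum2
    _ = (2 * C) ^ 2 * ∑' k, a k := tsum_mul_left
end
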